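/- arXiv:2011.12324 — 4 statements merged into one kernel-verified Lean document; each statement's English description precedes it below -/
import Mathlib

section
/- Let R be a commutative Noetherian ring and let (F_•, d_•): 0 → F_3 → F_2 → F_1 → F_0 = R be a length-3 free resolution of a cyclic R-module R/I, equipped with a unitary R-bilinear multiplication with F_i · F_j ⊆ F_{i+j} satisfying the Leibniz rule d_{i+j}(f_i f_j) = d_i(f_i) f_j + (−1)^i f_i d_j(f_j), graded commutativity f_i f_j = (−1)^{ij} f_j f_i, and f_i² = 0 for i odd. Then this multiplication is associative. -/
/-!
STATEMENT 0 (Buchsbaum–Eisenbud, Prop. 1.3):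
Let `R` be a commutative Noetherian ring and
`0 → F₃ → F₂ → F₁ → F₀ = R` a length-3 free resolution of the cyclic module `R/I`,
equipped with a unitary bilinear multiplication satisfying `Fᵢ · Fⱼ ⊆ F_{i+j}`, the
Leibniz rule, graded commutativity and vanishing of odd squares.  (Since `F₀ = R` and
the product is unitary, the action of `F₀` is scalar multiplication; the only
non-scalar products are `F₁ · F₁ → F₂` and `F₁ · F₂ → F₃`, products landing in degrees
`> 3` being zero.  Graded commutativity determines `F₂ · F₁` from `F₁ · F₂`.)
Then the multiplication is associative; the only nontrivial instance of associativity is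
`(x · y) · z = x · (y · z)` for `x, y, z ∈ F₁`, which by graded commutativity reads
`mul12 z (mul11 x y) = mul12 x (mul11 y z)`.
-/
theorem buchsbaum_eisenbud_length3_associativity
    {R : Type*} [CommRing R] [IsNoetherianRing R]
    (F1 F2 F3 : Type*)
    [AddCommGroup F1] [Module R F1] [Module.Free R F1] [Module.Finite R F1]
    [AddCommGroup F2] [Module R F2] [Module.Free R F2] [Module.Finite R F2]
    [AddCommGroup F3] [Module R F3] [Module.Free R F3] [Module.Finite R F3]
    (I : Ideal R)
    (d1 : F1 →ₗ[R] R) (d2 : F2 →ₗ[R] F1) (d3 : F3 →ₗ[R] F2)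
    -- `F` is a free resolution of the cyclic module `R/I`:
    (hd1 : LinearMap.range d1 = I)
    (hex1 : LinearMap.ker d1 = LinearMap.range d2)
    (hex2 : LinearMap.ker d2 = LinearMap.range d3)
    (hex3 : LinearMap.ker d3 = ⊥)
    -- the multiplication (unitary: `F₀ = R` acts by scalar multiplication):
    (mul11 : F1 →ₗ[R] F1 →ₗ[R] F2) (mul12 : F1 →ₗ[R] F2 →ₗ[R] F3)
    -- Leibniz rule:
    (hLeib11 : ∀ x y : F1, d2 (mul11 x y) = d1 x • y - d1 y • x)
    (hLeib12 : ∀ (x : F1) (z : F2), d3 (mul12 x z) = d1 x • z - mul11 x (d2 z))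
    -- graded commutativity and vanishing of odd squares:
    (hskew : ∀ x y : F1, mul11 x y = - mul11 y x)
    (halt : ∀ x : F1, mul11 x x = 0) :
    -- the multiplication is associative:
    ∀ x y z : F1, mul12 z (mul11 x y) = mul12 x (mul11 y z) := by
  intro x y z
  have hinj : Function.Injective d3 := LinearMap.ker_eq_bot.mp hex3
  apply hinj
  rw [hLeib12, hLeib12, hLeib11, hLeib11]
  simp only [map_sub, map_smul, hskew z x, hskew z y]
  module
end

section
/- Adopt the iterated trimming setup: (R, 𝔪, k) a regular local ring, I ⊆ R an ideal, (F_•, d_•) a free resolution of R/I with F_1 = F_1' ⊕ (⊕_{i=1}^t R e_0^i) where each e_0^i generates a free direct summand, d_2 = d_2' + d_0^1 + ⋯ + d_0^t with d_2' ∈ Hom(F_2, F_1') and d_0^i ∈ Hom(F_2, R e_0^i), ideals 𝔞_i with d_0^i(F_2) ⊆ 𝔞_i e_0^i, and free resolutions (G_•^i, m_•^i) of R/𝔞_i. Set K' = im(d_1|_{F_1'}), K_0^i = im(d_1|_{R e_0^i}), and J = K' + 𝔞_1 K_0^1 + ⋯ + 𝔞_t K_0^t. Then there exists a morphism of complexes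 from (⋯ → F_2 →^{d_2'} F_1', with maps d_k for k ≥ 3) to (⋯ → ⊕_{i=1}^t G_1^i →^{−Σ_i d_1(e_0^i) m_1^i} R, with maps ⊕_i m_k^i), with components q_k^i : F_{k+1} → G_k^i, and the mapping cone T_• of this morphism is a free resolution of R/J. -/
open IsLocalRing

lemma free_lift {R A B P : Type} [CommRing R] [AddCommGroup A] [Module R A]
    [AddCommGroup B] [Module R B] [AddCommGroup P] [Module R P] [Module.Free R P]
    (g : A →ₗ[R] B) (f : P →ₗ[R] B) (hf : ∀ x, f x ∈ LinearMap.range g) :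
    ∃ h : P →ₗ[R] A, ∀ x, g (h x) = f x := by
  obtain ⟨h, hh⟩ := Module.projective_lifting_property g.rangeRestrict
    (f.codRestrict (LinearMap.range g) hf) g.surjective_rangeRestrict
  refine ⟨h, fun x => ?_⟩
  have := congrArg (fun k => ((k x : LinearMap.range g) : B)) hh
  simpa using this


/-!
STATEMENT 1 (Iterated trimming complexes, Theorem 2.5 of the paper):

Setup: `(R, 𝔪, k)` regular local (Noetherian local whose maximal ideal is generated by a
regular sequence), `I ⊆ R` an ideal and `(F_•, d_•)` a free resolution of `R/I` with
`F₁ = F₁' ⊕ (⊕_{i=1}^t R e₀ⁱ)`.  We realize the direct sum decomposition concretely: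
the degree-1 term of the resolution is `F₁' × (Fin t → R)` and `e₀ⁱ = (0, Pi.single i 1)`.
The resolution is encoded as `d1 : F₁' × (Fin t → R) →ₗ R`, `d2 : FF 0 →ₗ F₁' × (Fin t → R)`
and `d (n) : FF (n+1) →ₗ FF n`, so `FF n` is the degree-`(n+2)` term.
`d₂ = d₂' + d₀¹ + ⋯ + d₀ᵗ` where `d₂' v = (d2 v).1` and `d₀ⁱ v = ((d2 v).2 i) • e₀ⁱ`;
`𝔞 i` is an ideal with `d₀ⁱ(F₂) ⊆ 𝔞 i · e₀ⁱ`, and `(G^i, m^i)` resolves `R/𝔞 i`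
(`GG i n` is the degree-`(n+1)` term, `m1 i : GG i 0 →ₗ R`, `m i n : GG i (n+1) →ₗ GG i n`).

Conclusion: there is a morphism of complexes as in diagram (2.1), with components
`q i n : FF n →ₗ GG i n` (i.e. `q_k^i : F_{k+1} → G_k^i`), from the complex
`(⋯ → F₂ →^{d₂'} F₁')` to `(⋯ → ⊕ᵢ G₁ᵢ →^{-∑ d1(e₀ⁱ) m₁ⁱ} R)`, and the mapping cone
`T` of this morphism (with cone sign convention `dₙ = [[d^F, 0], [(-1)^{n-1} φ, d^G]]`)
is a free resolution of `R/J`, `J = K' + 𝔞₁K₀¹ + ⋯ + 𝔞ₜK₀ᵗ`.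
The cone is `T₀ = R`, `T₁ = F₁' × (∀ i, GG i 0)`, `T_{n+2} = FF n × (∀ i, GG i (n+1))`,
with the differentials of Remark 2.9 (general-length version); exactness of the cone and
`range ℓ₁ = J` are spelled out elementwise.
-/
theorem iterated_trimming_complex_is_resolution
    {R : Type} [CommRing R] [IsNoetherianRing R] [IsLocalRing R]
    -- regular local ring: the maximal ideal is generated by a regular sequence
    (hreg : ∃ xs : List R, RingTheory.Sequence.IsRegular R xs ∧
      Ideal.span {a | a ∈ xs} = maximalIdeal R)
    (t : ℕ)
    -- the free modules of the resolution `F`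
    (F1' : Type) [AddCommGroup F1'] [Module R F1'] [Module.Free R F1'] [Module.Finite R F1']
    (FF : ℕ → Type) [∀ n, AddCommGroup (FF n)] [∀ n, Module R (FF n)]
    [∀ n, Module.Free R (FF n)] [∀ n, Module.Finite R (FF n)]
    -- the free modules of the resolutions `G^i`
    (GG : Fin t → ℕ → Type) [∀ i n, AddCommGroup (GG i n)] [∀ i n, Module R (GG i n)]
    [∀ i n, Module.Free R (GG i n)] [∀ i n, Module.Finite R (GG i n)]
    (I : Ideal R) (𝔞 : Fin t → Ideal R)
    -- differentials of `F`
    (d1 : (F1' × (Fin t → R)) →ₗ[R] R)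
    (d2 : FF 0 →ₗ[R] (F1' × (Fin t → R)))
    (d : ∀ n, FF (n + 1) →ₗ[R] FF n)
    -- `F` is a free resolution of `R/I`
    (hFres0 : LinearMap.range d1 = I)
    (hFres1 : LinearMap.ker d1 = LinearMap.range d2)
    (hFres2 : LinearMap.ker d2 = LinearMap.range (d 0))
    (hFres3 : ∀ n, LinearMap.ker (d n) = LinearMap.range (d (n + 1)))
    -- `d₀ⁱ(F₂) ⊆ 𝔞 i · e₀ⁱ`
    (ha : ∀ (i : Fin t) (v : FF 0), (d2 v).2 i ∈ 𝔞 i)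
    -- differentials of the `G^i`
    (m1 : ∀ i, GG i 0 →ₗ[R] R)
    (m : ∀ i n, GG i (n + 1) →ₗ[R] GG i n)
    -- `G^i` is a free resolution of `R/𝔞 i`
    (hGres0 : ∀ i, LinearMap.range (m1 i) = 𝔞 i)
    (hGres1 : ∀ i, LinearMap.ker (m1 i) = LinearMap.range (m i 0))
    (hGres2 : ∀ i n, LinearMap.ker (m i n) = LinearMap.range (m i (n + 1))) :
    -- the ideal `J = K' + ∑ᵢ 𝔞ᵢ · K₀ⁱ`
    ∃ q : ∀ (i : Fin t) (n : ℕ), FF n →ₗ[R] GG i n,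
      -- `q` is a morphism of complexes as in diagram (2.1):
      (∀ v : FF 0,
        d1 ((d2 v).1, 0) =
          - ∑ i, d1 (0, Pi.single i 1) * m1 i (q i 0 v)) ∧
      (∀ (i : Fin t) (n : ℕ) (w : FF (n + 1)),
        q i n (d n w) = m i n (q i (n + 1) w)) ∧
      -- the mapping cone `T` of this morphism is a free resolution of `R/J`:
      -- (1) `H₀(T) = R/J`, i.e. the image of `ℓ₁` is `J`:
      (∀ rr : R,
        (rr ∈ (LinearMap.range (d1 ∘ₗ LinearMap.inl R F1' (Fin t → R)) ⊔
          ⨆ i, 𝔞 i • Ideal.span {d1 (0, Pi.single i 1)})) ↔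
        ∃ z : F1' × (∀ i, GG i 0),
          d1 (z.1, 0) - ∑ i, m1 i (z.2 i) * d1 (0, Pi.single i 1) = rr) ∧
      -- (2) exactness at `T₁`:
      (∀ z : F1' × (∀ i, GG i 0),
        d1 (z.1, 0) - ∑ i, m1 i (z.2 i) * d1 (0, Pi.single i 1) = 0 ↔
        ∃ w : FF 0 × (∀ i, GG i 1),
          (((d2 w.1).1, fun i => - q i 0 w.1 + m i 0 (w.2 i)) :
            F1' × (∀ i, GG i 0)) = z) ∧
      -- (3) exactness at `T₂`:
      (∀ w : FF 0 × (∀ i, GG i 1),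
        (((d2 w.1).1, fun i => - q i 0 w.1 + m i 0 (w.2 i)) :
            F1' × (∀ i, GG i 0)) = 0 ↔
        ∃ u : FF 1 × (∀ i, GG i 2),
          ((d 0 u.1, fun i => q i 1 u.1 + m i 1 (u.2 i)) :
            FF 0 × (∀ i, GG i 1)) = w) ∧
      -- (4) exactness at `T_{n+3}` for all `n` (with the cone sign `(-1)^{n-1}`):
      (∀ (n : ℕ) (u : FF (n + 1) × (∀ i, GG i (n + 2))),
        ((d n u.1, fun i => ((-1 : R) ^ n) • q i (n + 1) u.1 + m i (n + 1) (u.2 i)) :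
            FF n × (∀ i, GG i (n + 1))) = 0 ↔
        ∃ v : FF (n + 2) × (∀ i, GG i (n + 3)),
          ((d (n + 1) v.1,
            fun i => ((-1 : R) ^ (n + 1)) • q i (n + 2) v.1 + m i (n + 2) (v.2 i)) :
            FF (n + 1) × (∀ i, GG i (n + 2))) = u) := by
  classical
  -- composite-zero facts
  have hd1d2 : ∀ v, d1 (d2 v) = 0 := by
    intro v
    have : d2 v ∈ LinearMap.ker d1 := by rw [hFres1]; exact ⟨v, rfl⟩
    simpa using this
  have hd2d0 : ∀ w, d2 (d 0 w) = 0 := by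
    intro w
    have : d 0 w ∈ LinearMap.ker d2 := by rw [hFres2]; exact ⟨w, rfl⟩
    simpa using this
  have hdd : ∀ n w, d n (d (n + 1) w) = 0 := by
    intro n w
    have : d (n + 1) w ∈ LinearMap.ker (d n) := by rw [hFres3 n]; exact ⟨w, rfl⟩
    simpa using this
  have hm1m : ∀ i x, m1 i (m i 0 x) = 0 := by
    intro i x
    have : m i 0 x ∈ LinearMap.ker (m1 i) := by rw [hGres1 i]; exact ⟨x, rfl⟩
    simpa using this
  have hmm : ∀ i n x, m i n (m i (n + 1) x) = 0 := by
    intro i n x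
    have : m i (n + 1) x ∈ LinearMap.ker (m i n) := by rw [hGres2 i n]; exact ⟨x, rfl⟩
    simpa using this
  -- splitting of d1 along the direct sum
  have hwdec : ∀ w : Fin t → R, w = ∑ i, w i • (Pi.single i (1 : R) : Fin t → R) := by
    intro w; funext j
    simp [Finset.sum_apply, Pi.single_apply]
  have hprod : ∀ w : Fin t → R,
      ((0 : F1'), w) = ∑ i, w i • (((0 : F1'), Pi.single i (1 : R)) : F1' × (Fin t → R)) := by
    intro w
    rw [Prod.ext_iff]
    refine ⟨by simp [Prod.fst_sum], ?_⟩
    rw [Prod.snd_sum]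
    simp only [Prod.smul_snd]
    exact hwdec w
  have hsplit : ∀ (x : F1') (w : Fin t → R),
      d1 (x, w) = d1 (x, 0) + ∑ i, w i * d1 ((0 : F1'), Pi.single i (1 : R)) := by
    intro x w
    have hx : ((x, w) : F1' × (Fin t → R)) = (x, 0) + (0, w) := by
      rw [Prod.ext_iff]; simp
    rw [hx, map_add, hprod w, map_sum]
    congr 1
    exact Finset.sum_congr rfl fun i _ => by rw [map_smul, smul_eq_mul]
  -- construction of the comparison maps q
  have hqex : ∀ i : Fin t, ∃ q : ∀ n, FF n →ₗ[R] GG i n,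
      (∀ v, m1 i (q 0 v) = (d2 v).2 i) ∧
      (∀ n w, q n (d n w) = m i n (q (n + 1) w)) := by
    intro i
    obtain ⟨q0, hq0'⟩ := free_lift (m1 i)
      ((LinearMap.proj i).comp ((LinearMap.snd R F1' (Fin t → R)).comp d2))
      (fun v => by rw [hGres0 i]; exact ha i v)
    have hq0 : ∀ v, m1 i (q0 v) = (d2 v).2 i := hq0'
    obtain ⟨q1, hq1⟩ := free_lift (m i 0) (q0.comp (d 0))
      (fun w => by
        rw [← hGres1 i, LinearMap.mem_ker]
        show m1 i (q0 (d 0 w)) = 0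
        rw [hq0, hd2d0]
        rfl)
    have hr : ∀ (n : ℕ) (x : {p : (FF n →ₗ[R] GG i n) × (FF (n + 1) →ₗ[R] GG i (n + 1)) //
        ∀ w, p.1 (d n w) = m i n (p.2 w)}) (w : FF (n + 2)),
        (x.1.2.comp (d (n + 1))) w ∈ LinearMap.range (m i (n + 1)) := by
      intro n x w
      rw [← hGres2 i n, LinearMap.mem_ker]
      show m i n (x.1.2 (d (n + 1) w)) = 0
      rw [← x.2 (d (n + 1) w), hdd n w, map_zero]
    let step : ∀ n, {p : (FF n →ₗ[R] GG i n) × (FF (n + 1) →ₗ[R] GG i (n + 1)) //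
        ∀ w, p.1 (d n w) = m i n (p.2 w)} →
        {p : (FF (n + 1) →ₗ[R] GG i (n + 1)) × (FF (n + 2) →ₗ[R] GG i (n + 2)) //
        ∀ w, p.1 (d (n + 1) w) = m i (n + 1) (p.2 w)} := fun n x =>
      ⟨(x.1.2, Classical.choose (free_lift (m i (n + 1)) (x.1.2.comp (d (n + 1))) (hr n x))),
        fun w => (Classical.choose_spec (free_lift (m i (n + 1)) (x.1.2.comp (d (n + 1))) (hr n x)) w).symm⟩
    let pack : ∀ n, {p : (FF n →ₗ[R] GG i n) × (FF (n + 1) →ₗ[R] GG i (n + 1)) //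
        ∀ w, p.1 (d n w) = m i n (p.2 w)} := fun n =>
      Nat.rec ⟨(q0, q1), fun w => (hq1 w).symm⟩ step n
    refine ⟨fun n => (pack n).1.1, fun v => hq0 v, fun n w => ?_⟩
    show (pack n).1.1 (d n w) = m i n ((pack (n + 1)).1.1 w)
    exact (pack n).2 w
  choose q hq0 hqlink using hqex
  refine ⟨q, ?_, hqlink, ?_, ?_, ?_, ?_⟩
  · -- the chain map condition in degree 0
    intro v
    have h0 : d1 ((d2 v).1, (d2 v).2) = 0 := hd1d2 v
    rw [hsplit] at h0
    rw [eq_neg_of_add_eq_zero_left h0, neg_inj]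
    exact Finset.sum_congr rfl fun i _ => by rw [hq0 i v, mul_comm]
  · -- image of ℓ₁ is J
    intro rr
    set L1 : (F1' × (∀ i, GG i 0)) →ₗ[R] R :=
      ((d1.comp (LinearMap.inl R F1' (Fin t → R))).comp (LinearMap.fst R F1' (∀ i, GG i 0))) -
        ∑ i, (d1 ((0 : F1'), Pi.single i (1 : R))) •
          ((m1 i).comp ((LinearMap.proj i).comp (LinearMap.snd R F1' (∀ i, GG i 0)))) with hL1def
    have hL1 : ∀ z : F1' × (∀ i, GG i 0),
        L1 z = d1 (z.1, 0) - ∑ i, m1 i (z.2 i) * d1 ((0 : F1'), Pi.single i (1 : R)) := by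
      intro z
      simp [hL1def, mul_comm]
    constructor
    · intro hrr
      have hle : (LinearMap.range (d1 ∘ₗ LinearMap.inl R F1' (Fin t → R)) ⊔
          ⨆ i, 𝔞 i • Ideal.span {d1 ((0 : F1'), Pi.single i (1 : R))}) ≤ LinearMap.range L1 := by
        refine sup_le ?_ (iSup_le fun i => ?_)
        · rintro x ⟨y, rfl⟩
          exact ⟨(y, 0), by rw [hL1]; simp⟩
        · refine Submodule.smul_le.2 fun a ha' n hn => ?_
          obtain ⟨c, rfl⟩ := Ideal.mem_span_singleton'.1 hn
          obtain ⟨g, hg⟩ : a ∈ LinearMap.range (m1 i) := by rw [hGres0 i]; exact ha'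
          refine ⟨((0 : F1'), Pi.single i (-(c • g))), ?_⟩
          rw [hL1]
          have hsum : ∑ j, m1 j ((Pi.single i (-(c • g)) : ∀ j, GG j 0) j) *
              d1 ((0 : F1'), Pi.single j (1 : R)) =
              m1 i ((Pi.single i (-(c • g)) : ∀ j, GG j 0) i) *
                d1 ((0 : F1'), Pi.single i (1 : R)) := by
            refine Finset.sum_eq_single i (fun j _ hji => ?_)
              (fun h => absurd (Finset.mem_univ i) h)
            rw [Pi.single_eq_of_ne hji, map_zero, zero_mul]
          rw [Pi.single_eq_same] at hsum
          rw [hsum, map_neg, map_smul, hg]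
          simp [smul_eq_mul, Prod.mk_zero_zero]
          ring
      obtain ⟨z, hz⟩ := hle hrr
      exact ⟨z, (hL1 z).symm.trans hz⟩
    · rintro ⟨z, rfl⟩
      refine sub_mem (Submodule.mem_sup_left ⟨z.1, rfl⟩)
        (Submodule.sum_mem _ fun i _ => Submodule.mem_sup_right
          (Submodule.mem_iSup_of_mem i ?_))
      have h1 : m1 i (z.2 i) ∈ 𝔞 i := by rw [← hGres0 i]; exact ⟨z.2 i, rfl⟩
      have := Submodule.smul_mem_smul h1
        (Submodule.mem_span_singleton_self (d1 ((0 : F1'), Pi.single i (1 : R))))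
      simpa [smul_eq_mul] using this
  · -- exactness at T₁
    intro z
    constructor
    · intro hz
      have hx : d1 ((z.1, fun i => -(m1 i (z.2 i))) : F1' × (Fin t → R)) = 0 := by
        rw [hsplit]
        simp only [neg_mul, Finset.sum_neg_distrib]
        rw [← sub_eq_add_neg]
        exact hz
      have hker : ((z.1, fun i => -(m1 i (z.2 i))) : F1' × (Fin t → R)) ∈ LinearMap.ker d1 := hx
      rw [hFres1] at hker
      obtain ⟨v, hv⟩ := hker
      have hv1 : (d2 v).1 = z.1 := by rw [hv]
      have hv2 : ∀ i, (d2 v).2 i = -(m1 i (z.2 i)) := fun i => by rw [hv]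
      have hgi : ∀ i, ∃ g : GG i 1, m i 0 g = z.2 i + q i 0 v := by
        intro i
        have hk : z.2 i + q i 0 v ∈ LinearMap.ker (m1 i) := by
          rw [LinearMap.mem_ker, map_add, hq0 i v, hv2 i]
          ring
        rw [hGres1 i] at hk
        exact hk
      choose g hg using hgi
      refine ⟨(v, g), Prod.ext_iff.2 ⟨hv1, funext fun i => ?_⟩⟩
      show -q i 0 v + m i 0 (g i) = z.2 i
      rw [hg i]
      abel
    · rintro ⟨w, rfl⟩
      have h0 : d1 ((d2 w.1).1, (d2 w.1).2) = 0 := hd1d2 w.1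
      rw [hsplit] at h0
      have hterm : ∀ i, m1 i (-q i 0 w.1 + m i 0 (w.2 i)) = -((d2 w.1).2 i) := by
        intro i
        rw [map_add, map_neg, hq0 i w.1, hm1m i]
        ring
      show d1 ((d2 w.1).1, 0) -
        ∑ i, m1 i (-q i 0 w.1 + m i 0 (w.2 i)) * d1 ((0 : F1'), Pi.single i (1 : R)) = 0
      simp only [hterm, neg_mul, Finset.sum_neg_distrib, sub_neg_eq_add]
      exact h0
  · -- exactness at T₂
    intro w
    constructor
    · intro hw0
      rw [Prod.mk_eq_zero] at hw0
      obtain ⟨h1, h2⟩ := hw0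
      have h2' : ∀ i, m i 0 (w.2 i) = q i 0 w.1 := by
        intro i
        have h := congrFun h2 i
        have h' : -q i 0 w.1 + m i 0 (w.2 i) = 0 := h
        rw [neg_add_eq_zero] at h'
        exact h'.symm
      have hker : w.1 ∈ LinearMap.ker d2 := by
        rw [LinearMap.mem_ker]
        refine Prod.ext_iff.2 ⟨h1, funext fun i => ?_⟩
        show (d2 w.1).2 i = 0
        rw [← hq0 i w.1, ← h2' i, hm1m i]
      rw [hFres2] at hker
      obtain ⟨u1, hu1⟩ := hker
      have hgi : ∀ i, ∃ g : GG i 2, m i 1 g = w.2 i - q i 1 u1 := by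
        intro i
        have hk : w.2 i - q i 1 u1 ∈ LinearMap.ker (m i 0) := by
          rw [LinearMap.mem_ker, map_sub, h2' i, ← hqlink i 0 u1, hu1, sub_self]
        rw [hGres2 i 0] at hk
        exact hk
      choose g hg using hgi
      refine ⟨(u1, g), Prod.ext_iff.2 ⟨hu1, funext fun i => ?_⟩⟩
      show q i 1 u1 + m i 1 (g i) = w.2 i
      rw [hg i]
      abel
    · rintro ⟨u, rfl⟩
      refine Prod.mk_eq_zero.2 ⟨?_, funext fun i => ?_⟩
      · rw [hd2d0]; rfl
      · show -q i 0 (d 0 u.1) + m i 0 (q i 1 u.1 + m i 1 (u.2 i)) = 0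
        rw [map_add, hmm i 0, add_zero, ← hqlink i 0 u.1, neg_add_cancel]
  · -- exactness at T_{n+3}
    intro n u
    constructor
    · intro hu0
      rw [Prod.mk_eq_zero] at hu0
      obtain ⟨h1, h2⟩ := hu0
      have h2' : ∀ i, ((-1 : R) ^ n) • q i (n + 1) u.1 + m i (n + 1) (u.2 i) = 0 :=
        fun i => congrFun h2 i
      have hker : u.1 ∈ LinearMap.ker (d n) := h1
      rw [hFres3 n] at hker
      obtain ⟨v1, hv1⟩ := hker
      have hgi : ∀ i, ∃ g : GG i (n + 3),
          m i (n + 2) g = u.2 i + ((-1 : R) ^ n) • q i (n + 2) v1 := by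
        intro i
        have hk : u.2 i + ((-1 : R) ^ n) • q i (n + 2) v1 ∈ LinearMap.ker (m i (n + 1)) := by
          rw [LinearMap.mem_ker, map_add, map_smul, ← hqlink i (n + 1) v1, hv1]
          exact (add_comm _ _).trans (h2' i)
        rw [hGres2 i (n + 1)] at hk
        exact hk
      choose g hg using hgi
      refine ⟨(v1, g), Prod.ext_iff.2 ⟨hv1, funext fun i => ?_⟩⟩
      show ((-1 : R) ^ (n + 1)) • q i (n + 2) v1 + m i (n + 2) (g i) = u.2 i
      rw [hg i, pow_succ, mul_neg_one, neg_smul]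
      abel
    · rintro ⟨v, rfl⟩
      refine Prod.mk_eq_zero.2 ⟨hdd n v.1, funext fun i => ?_⟩
      show ((-1 : R) ^ n) • q i (n + 1) (d (n + 1) v.1) +
        m i (n + 1) (((-1 : R) ^ (n + 1)) • q i (n + 2) v.1 + m i (n + 2) (v.2 i)) = 0
      rw [map_add, map_smul, hmm i (n + 1), add_zero, ← hqlink i (n + 1) v.1,
        pow_succ, mul_neg_one, neg_smul, add_neg_cancel]
end

section
/- Adopt the iterated trimming setup ((R,𝔪,k) regular local, I ⊆ R, F_• a free resolution of R/I with F_1 = F_1' ⊕ (⊕_{i=1}^t R e_0^i), d_2 = d_2' + Σ_i d_0^i, ideals 𝔞_i with d_0^i(F_2) ⊆ 𝔞_i e_0^i, resolutions (G_•^i, m_•^i) of R/𝔞_i, comparison maps q_k^i : F_{k+1} → G_k^i) and assume F_• and each G_•^i are length-3 DG-algebras. Then the length-3 iterated trimming complex (T_•, ℓ_•) admits the structure of an associative DG-algebra, whose product may be chosen so that: (1) for f_1, f_1' ∈ F_1': f_1 · f_1' = f_1 ·_F f_1' + Σ_{i=1}^t g_2^i where g_2^i ∈ G_2^i satisfies m_2^i(g_2^i)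 = q_1^i(f_1 ·_F f_1'); (2) for f_1 ∈ F_1', g_1^i ∈ G_1^i: f_1 · g_1^i = m_1^i(g_1^i)(e_0^i ·_F f_1) + Σ_{j=1}^t g_2^j where m_2^j(g_2^j) = m_1^i(g_1^i) q_1^j(e_0^i ·_F f_1) + δ_{ij} d_1(f_1) g_1^i; (3) for g_1^i, g_1'^i ∈ G_1^i: g_1^i · g_1'^i = −(g_1^i ·_{G^i} g_1'^i) d_1(e_0^i); (4) for i < j: g_1^i · g_1^j = m_1^i(g_1^i) m_1^j(g_1^j)(e_0^i ·_F e_0^j) + Σ_{k=1}^t g_2^k where m_2^k(g_2^k) = m_1^i(g_1^i) m_1^j(g_1^j) q_1^k(e_0^i ·_F e_0^j) + δ_{ki} m_1^j(g_1^j) d_1(e_0^j) g_1^i − δ_{kj} m_1^i(g_1^i) d_1(e_0^i) g_1^j; (5) for f_1 ∈ F_1', f_2 ∈ F_2: f_1 · f_2 = f_1 ·_F f_2 + Σ_{i=1}^t g_3^i for suitable g_3^i ∈ G_3^i; (6) f_1 · g_2^i ∈ ⊕_{j=1}^t G_3^j; (7) g_1^i · g_2^i = −(g_1^i ·_{G^i}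 g_2^i) d_1(e_0^i); (8) for i ≠ j: g_1^i · g_2^j ∈ ⊕_{k=1}^t G_3^k; (9) g_1^i · f_2 = −m_1^i(g_1^i)(e_0^i ·_F f_2) + Σ_{j=1}^t g_3^j for suitable g_3^j ∈ G_3^j. -/
open IsLocalRing

/-!
STATEMENT 2 (Theorem 3.2 of the paper): DG-algebra structure on length-3 iterated
trimming complexes.

The iterated trimming setup is encoded as in the general case: the degree-1 term of
the resolution `F` of `R/I` is the direct sum `F₁' × (Fin t → R)`, with
`e₀ⁱ = (0, Pi.single i 1)`; `d₂' v = (d2 v).1`, `d₀ⁱ v = ((d2 v).2 i) • e₀ⁱ`,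
`𝔞 i` is an ideal with `d₀ⁱ(F₂) ⊆ 𝔞 i e₀ⁱ` and `(G^i_•, m^i_•)` is a free resolution
of `R/𝔞 i`.  `F_•` and the `G^i_•` are length-3 DG-algebras, with products
`μ11 : F₁ × F₁ → F₂`, `μ12 : F₁ × F₂ → F₃` and `γ11 i, γ12 i` respectively
(products in other degrees are determined by unitality, graded commutativity and
vanishing above the top degree).  `q1 i : F₂ → G₁ⁱ`, `q2 i : F₃ → G₂ⁱ` are the
comparison maps of the trimming complex.

The iterated trimming complex `T` is `T₁ = F₁' × (∀ i, G₁ⁱ)`, `T₂ = F₂ × (∀ i, G₂ⁱ)`,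
`T₃ = F₃ × (∀ i, G₃ⁱ)` with the differentials `ℓ` of Remark 2.9 (`Tl1`, `Tl2`, `Tl3`
below).  The conclusion: `T` admits an associative DG-algebra structure `(t11, t12)`
whose products are given by the formulas (1)–(9) of Theorem 3.2.
-/

universe u

section TrimmingSetup

variable {R : Type u} [CommRing R] {t : ℕ}
variable {F1' F2 F3 : Type u}
variable [AddCommGroup F1'] [Module R F1'] [AddCommGroup F2] [Module R F2]
variable [AddCommGroup F3] [Module R F3]
variable {G1 G2 G3 : Fin t → Type u}
variable [∀ i, AddCommGroup (G1 i)] [∀ i, Module R (G1 i)]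
variable [∀ i, AddCommGroup (G2 i)] [∀ i, Module R (G2 i)]
variable [∀ i, AddCommGroup (G3 i)] [∀ i, Module R (G3 i)]

/-- The differential `ℓ₁` of the trimming complex (Remark 2.9). -/
def Tl1 (d1 : (F1' × (Fin t → R)) →ₗ[R] R) (m1 : ∀ i, G1 i →ₗ[R] R) :
    (F1' × (∀ i, G1 i)) → R :=
  fun z => d1 (z.1, 0) - ∑ i, m1 i (z.2 i) * d1 (0, Pi.single i 1)

/-- The differential `ℓ₂` of the trimming complex (Remark 2.9). -/
def Tl2 (d2 : F2 →ₗ[R] (F1' × (Fin t → R))) (q1 : ∀ i, F2 →ₗ[R] G1 i)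
    (m2 : ∀ i, G2 i →ₗ[R] G1 i) :
    (F2 × (∀ i, G2 i)) → (F1' × (∀ i, G1 i)) :=
  fun w => ((d2 w.1).1, fun i => - q1 i w.1 + m2 i (w.2 i))

/-- The differential `ℓ₃` of the trimming complex (Remark 2.9). -/
def Tl3 (d3 : F3 →ₗ[R] F2) (q2 : ∀ i, F3 →ₗ[R] G2 i)
    (m3 : ∀ i, G3 i →ₗ[R] G2 i) :
    (F3 × (∀ i, G3 i)) → (F2 × (∀ i, G2 i)) :=
  fun u => (d3 u.1, fun i => q2 i u.1 + m3 i (u.2 i))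

/-- The axioms for an associative DG-algebra structure `(t11, t12)` on the length-3
trimming complex `T` (Leibniz rule, graded commutativity, vanishing odd squares,
associativity). -/
def TrimDGAxioms (d1 : (F1' × (Fin t → R)) →ₗ[R] R)
    (d2 : F2 →ₗ[R] (F1' × (Fin t → R))) (d3 : F3 →ₗ[R] F2)
    (m1 : ∀ i, G1 i →ₗ[R] R) (m2 : ∀ i, G2 i →ₗ[R] G1 i) (m3 : ∀ i, G3 i →ₗ[R] G2 i)
    (q1 : ∀ i, F2 →ₗ[R] G1 i) (q2 : ∀ i, F3 →ₗ[R] G2 i)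
    (t11 : (F1' × (∀ i, G1 i)) →ₗ[R] (F1' × (∀ i, G1 i)) →ₗ[R] (F2 × (∀ i, G2 i)))
    (t12 : (F1' × (∀ i, G1 i)) →ₗ[R] (F2 × (∀ i, G2 i)) →ₗ[R] (F3 × (∀ i, G3 i))) :
    Prop :=
  (∀ z z', Tl2 d2 q1 m2 (t11 z z') = Tl1 d1 m1 z • z' - Tl1 d1 m1 z' • z) ∧
  (∀ z, t11 z z = 0) ∧
  (∀ z z', t11 z z' = - t11 z' z) ∧
  (∀ z w, Tl3 d3 q2 m3 (t12 z w) = Tl1 d1 m1 z • w - t11 z (Tl2 d2 q1 m2 w)) ∧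
  (∀ z z' z'', t12 z'' (t11 z z') = t12 z (t11 z' z''))

/-- The formulas (1)–(9) of Theorem 3.2 for the product on the trimming complex. -/
def TrimDGFormulas [DecidableEq (Fin t)]
    (d1 : (F1' × (Fin t → R)) →ₗ[R] R) (d3 : F3 →ₗ[R] F2)
    (m1 : ∀ i, G1 i →ₗ[R] R) (m2 : ∀ i, G2 i →ₗ[R] G1 i) (m3 : ∀ i, G3 i →ₗ[R] G2 i)
    (q1 : ∀ i, F2 →ₗ[R] G1 i) (q2 : ∀ i, F3 →ₗ[R] G2 i)
    (μ11 : (F1' × (Fin t → R)) →ₗ[R] (F1' × (Fin t → R)) →ₗ[R] F2)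
    (μ12 : (F1' × (Fin t → R)) →ₗ[R] F2 →ₗ[R] F3)
    (γ11 : ∀ i, G1 i →ₗ[R] G1 i →ₗ[R] G2 i)
    (γ12 : ∀ i, G1 i →ₗ[R] G2 i →ₗ[R] G3 i)
    (t11 : (F1' × (∀ i, G1 i)) →ₗ[R] (F1' × (∀ i, G1 i)) →ₗ[R] (F2 × (∀ i, G2 i)))
    (t12 : (F1' × (∀ i, G1 i)) →ₗ[R] (F2 × (∀ i, G2 i)) →ₗ[R] (F3 × (∀ i, G3 i))) :
    Prop :=
  -- (1)  F₁' ⊗ F₁' → F₂ ⊕ (⊕ᵢ G₂ⁱ)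
  (∀ f f' : F1', ∃ g2 : ∀ i, G2 i,
    (∀ i, m2 i (g2 i) = q1 i (μ11 (f, 0) (f', 0))) ∧
    t11 (f, 0) (f', 0) = (μ11 (f, 0) (f', 0), g2)) ∧
  -- (2)  F₁' ⊗ G₁ⁱ → F₂ ⊕ (⊕ⱼ G₂ʲ)
  (∀ (f : F1') (i : Fin t) (g : G1 i), ∃ g2 : ∀ j, G2 j,
    (∀ j, m2 j (g2 j) =
      m1 i g • q1 j (μ11 (0, Pi.single i 1) (f, 0)) + Pi.single i (d1 (f, 0) • g) j) ∧
    t11 (f, 0) (0, Pi.single i g) = (m1 i g • μ11 (0, Pi.single i 1) (f, 0), g2)) ∧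
  -- (3)  G₁ⁱ ⊗ G₁ⁱ → F₂ ⊕ (⊕ⱼ G₂ʲ)
  (∀ (i : Fin t) (g g' : G1 i),
    t11 (0, Pi.single i g) (0, Pi.single i g') =
      (0, Pi.single i (-(d1 (0, Pi.single i 1) • γ11 i g g')))) ∧
  -- (4)  G₁ⁱ ⊗ G₁ʲ → F₂ ⊕ (⊕ₖ G₂ᵏ), i < j
  (∀ (i j : Fin t), i < j → ∀ (g : G1 i) (g' : G1 j), ∃ g2 : ∀ k, G2 k,
    (∀ k, m2 k (g2 k) =
      (m1 i g * m1 j g') • q1 k (μ11 (0, Pi.single i 1) (0, Pi.single j 1)) +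
      Pi.single i ((m1 j g' * d1 (0, Pi.single j 1)) • g) k -
      Pi.single j ((m1 i g * d1 (0, Pi.single i 1)) • g') k) ∧
    t11 (0, Pi.single i g) (0, Pi.single j g') =
      ((m1 i g * m1 j g') • μ11 (0, Pi.single i 1) (0, Pi.single j 1), g2)) ∧
  -- (5)  F₁' ⊗ F₂ → F₃ ⊕ (⊕ᵢ G₃ⁱ)
  (∀ (f : F1') (w : F2), ∃ g3 : ∀ i, G3 i,
    t12 (f, 0) (w, 0) = (μ12 (f, 0) w, g3)) ∧
  -- (6)  F₁' ⊗ G₂ⁱ → F₃ ⊕ (⊕ⱼ G₃ʲ)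
  (∀ (f : F1') (i : Fin t) (c : G2 i), ∃ g3 : ∀ j, G3 j,
    t12 (f, 0) (0, Pi.single i c) = (0, g3)) ∧
  -- (7)  G₁ⁱ ⊗ G₂ⁱ → F₃ ⊕ (⊕ⱼ G₃ʲ)
  (∀ (i : Fin t) (g : G1 i) (c : G2 i),
    t12 (0, Pi.single i g) (0, Pi.single i c) =
      (0, Pi.single i (-(d1 (0, Pi.single i 1) • γ12 i g c)))) ∧
  -- (8)  G₁ⁱ ⊗ G₂ʲ → F₃ ⊕ (⊕ₖ G₃ᵏ), i ≠ j
  (∀ (i j : Fin t), i ≠ j → ∀ (g : G1 i) (c : G2 j), ∃ g3 : ∀ k, G3 k,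
    t12 (0, Pi.single i g) (0, Pi.single j c) = (0, g3)) ∧
  -- (9)  G₁ⁱ ⊗ F₂ → F₃ ⊕ (⊕ⱼ G₃ʲ)
  (∀ (i : Fin t) (g : G1 i) (w : F2), ∃ g3 : ∀ j, G3 j,
    t12 (0, Pi.single i g) (w, 0) = (-(m1 i g) • μ12 (0, Pi.single i 1) w, g3))

end TrimmingSetup

namespace TrimAux


variable {R : Type u} [CommRing R] {t : ℕ}
variable {F1' F2 F3 : Type u}
variable [AddCommGroup F1'] [Module R F1'] [AddCommGroup F2] [Module R F2]
variable [AddCommGroup F3] [Module R F3]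
variable {G1 G2 G3 : Fin t → Type u}
variable [∀ i, AddCommGroup (G1 i)] [∀ i, Module R (G1 i)]
variable [∀ i, AddCommGroup (G2 i)] [∀ i, Module R (G2 i)]
variable [∀ i, AddCommGroup (G3 i)] [∀ i, Module R (G3 i)]

lemma bilin_neg_swap {A C : Type u} [AddCommGroup A] [Module R A] [AddCommGroup C]
    [Module R C] (κ : A →ₗ[R] A →ₗ[R] C) (halt : ∀ a, κ a a = 0) (a b : A) :
    κ a b = - κ b a := by
  have h := halt (a + b)
  simp only [map_add, LinearMap.add_apply, halt a, halt b, zero_add, add_zero] at h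
  exact eq_neg_of_add_eq_zero_right h

lemma exists_triangular_split {A C : Type u} [AddCommGroup A] [Module R A]
    [Module.Free R A] [Module.Finite R A] [AddCommGroup C] [Module R C]
    (κ : A →ₗ[R] A →ₗ[R] C) (S : Submodule R C)
    (hmem : ∀ a b, κ a b ∈ S) (halt : ∀ a, κ a a = 0) :
    ∃ θ : A →ₗ[R] A →ₗ[R] C, (∀ a b, θ a b ∈ S) ∧ ∀ a b, θ a b - θ b a = κ a b := by
  classical
  set b := Module.Free.chooseBasis R A with hb
  set e := Fintype.equivFin (Module.Free.ChooseBasisIndex R A) with he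
  set θ : A →ₗ[R] A →ₗ[R] C :=
    b.constr R (fun p => b.constr R (fun q => if e p < e q then κ (b p) (b q) else 0)) with hθ
  have hbasis : ∀ p q, θ (b p) (b q) = if e p < e q then κ (b p) (b q) else 0 := by
    intro p q
    rw [hθ, Module.Basis.constr_basis, Module.Basis.constr_basis]
  refine ⟨θ, ?_, ?_⟩
  · intro a c
    have key : θ.compr₂ S.mkQ = 0 := by
      apply b.ext; intro p; apply b.ext; intro q
      simp only [LinearMap.compr₂_apply, hbasis, LinearMap.zero_apply]
      split_ifs with h
      · exact (Submodule.Quotient.mk_eq_zero S).2 (hmem _ _)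
      · simp
    have h2 := LinearMap.congr_fun (LinearMap.congr_fun key a) c
    simp only [LinearMap.compr₂_apply, LinearMap.zero_apply, Submodule.mkQ_apply] at h2
    exact (Submodule.Quotient.mk_eq_zero S).1 h2
  · intro a c
    have key : θ - θ.flip = κ := by
      apply b.ext; intro p; apply b.ext; intro q
      simp only [LinearMap.sub_apply, LinearMap.flip_apply, hbasis]
      rcases lt_trichotomy (e p) (e q) with h | h | h
      · rw [if_pos h, if_neg (by omega), sub_zero]
      · have : p = q := e.injective (Fin.ext (by omega))
        subst this
        rw [if_neg (by omega), halt, sub_zero]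
      · rw [if_neg (by omega), if_pos h, zero_sub,
          bilin_neg_swap κ halt (b p) (b q)]
    have h2 := LinearMap.congr_fun (LinearMap.congr_fun key a) c
    simpa using h2

lemma exists_bilift {A B C D : Type u} [AddCommGroup A] [Module R A] [Module.Free R A]
    [AddCommGroup B] [Module R B] [Module.Free R B]
    [AddCommGroup C] [Module R C] [AddCommGroup D] [Module R D]
    (π : D →ₗ[R] C) (β : A →ₗ[R] B →ₗ[R] C) (h : ∀ a b, β a b ∈ LinearMap.range π) :
    ∃ L : A →ₗ[R] B →ₗ[R] D, ∀ a b, π (L a b) = β a b := by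
  classical
  set S := LinearMap.range π with hS
  set π' : D →ₗ[R] S := π.codRestrict S (fun d => LinearMap.mem_range_self π d) with hπ
  have hπ' : Function.Surjective π' := by
    rintro ⟨c, d, rfl⟩
    exact ⟨d, Subtype.ext rfl⟩
  set β' : A →ₗ[R] B →ₗ[R] S := LinearMap.mk₂ R (fun a bb => ⟨β a bb, h a bb⟩)
    (fun a₁ a₂ bb => Subtype.ext (by simp))
    (fun c a bb => Subtype.ext (by simp))
    (fun a b₁ b₂ => Subtype.ext (by simp))
    (fun c a bb => Subtype.ext (by simp)) with hβ'
  obtain ⟨L0, hL0⟩ := Module.projective_lifting_property π' (TensorProduct.lift β') hπ'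
  refine ⟨(TensorProduct.mk R A B).compr₂ L0, fun a bb => ?_⟩
  have h1 := LinearMap.congr_fun hL0 (a ⊗ₜ[R] bb)
  have h2 := congrArg Subtype.val h1
  simpa [hπ, hβ'] using h2






/-- `E (f, g) = (f, -(m1 g))`, realizing `T₁` inside `F₁`. -/
def Emap (m1 : ∀ i, G1 i →ₗ[R] R) : (F1' × (∀ i, G1 i)) →ₗ[R] (F1' × (Fin t → R)) where
  toFun z := (z.1, fun i => - m1 i (z.2 i))
  map_add' x y := by
    refine Prod.ext rfl (funext fun i => ?_)
    show -(m1 i (x.2 i + y.2 i)) = -(m1 i (x.2 i)) + -(m1 i (y.2 i))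
    rw [map_add]; abel
  map_smul' c x := by
    refine Prod.ext rfl (funext fun i => ?_)
    show -(m1 i (c • x.2 i)) = c • -(m1 i (x.2 i))
    rw [map_smul, smul_neg]

@[simp] lemma Emap_fst (m1 : ∀ i, G1 i →ₗ[R] R) (z : F1' × (∀ i, G1 i)) :
    (Emap m1 z).1 = z.1 := rfl

@[simp] lemma Emap_snd (m1 : ∀ i, G1 i →ₗ[R] R) (z : F1' × (∀ i, G1 i)) (i : Fin t) :
    (Emap m1 z).2 i = - m1 i (z.2 i) := rfl

/-- kill the `i`-th coordinate in `F₁`. -/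
def Zmap (i : Fin t) : (F1' × (Fin t → R)) →ₗ[R] (F1' × (Fin t → R)) where
  toFun a := (a.1, a.2 - Pi.single i (a.2 i))
  map_add' x y := by
    refine Prod.ext rfl ?_
    show (x.2 + y.2) - Pi.single i ((x.2 + y.2) i)
        = (x.2 - Pi.single i (x.2 i)) + (y.2 - Pi.single i (y.2 i))
    rw [Pi.add_apply, Pi.single_add]; abel
  map_smul' c x := by
    refine Prod.ext rfl ?_
    show (c • x.2) - Pi.single i ((c • x.2) i) = c • (x.2 - Pi.single i (x.2 i))
    rw [Pi.smul_apply, Pi.single_smul, smul_sub]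

def ehat (i : Fin t) : F1' × (Fin t → R) := (0, Pi.single i 1)

def Jmap (m1 : ∀ i, G1 i →ₗ[R] R) (i : Fin t) :
    (F1' × (∀ i, G1 i)) →ₗ[R] (F1' × (Fin t → R)) :=
  (Zmap i).comp (Emap m1)

@[simp] lemma Zmap_apply (i : Fin t) (a : F1' × (Fin t → R)) :
    Zmap i a = (a.1, a.2 - Pi.single i (a.2 i)) := rfl

lemma Zmap_snd_self (i : Fin t) (a : F1' × (Fin t → R)) : (Zmap i a).2 i = 0 := by
  rw [Zmap_apply]
  simp

lemma Zmap_idem (i : Fin t) (a : F1' × (Fin t → R)) : Zmap i (Zmap i a) = Zmap i a := by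
  rw [Zmap_apply i a, Zmap_apply]
  refine Prod.ext rfl ?_
  simp

lemma Zmap_ehat (i : Fin t) : Zmap i (ehat (R := R) (F1' := F1') i) = 0 := by
  rw [Zmap_apply]
  refine Prod.ext rfl ?_
  show (Pi.single i 1 : Fin t → R) - Pi.single i ((Pi.single i 1 : Fin t → R) i) = 0
  rw [Pi.single_eq_same, sub_self]

lemma Zmap_ehat' (i : Fin t) :
    Zmap i ((0 : F1'), (Pi.single i 1 : Fin t → R)) = 0 := Zmap_ehat i

lemma single_eq_smul (i : Fin t) (c : R) :
    (Pi.single i c : Fin t → R) = c • (Pi.single i 1 : Fin t → R) := by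
  rw [← Pi.single_smul, smul_eq_mul, mul_one]

lemma Emap_left (m1 : ∀ i, G1 i →ₗ[R] R) (f : F1') :
    Emap m1 (f, (0 : ∀ i, G1 i)) = (f, 0) := by
  refine Prod.ext rfl (funext fun i => ?_)
  show -(m1 i 0) = 0
  simp

lemma Emap_single (m1 : ∀ i, G1 i →ₗ[R] R) (i : Fin t) (g : G1 i) :
    Emap m1 ((0 : F1'), Pi.single i g) = (-(m1 i g)) • ehat (R := R) (F1' := F1') i := by
  refine Prod.ext ?_ (funext fun j => ?_)
  · show (0 : F1') = (-(m1 i g)) • (0 : F1')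
    rw [smul_zero]
  · show -(m1 j (Pi.single i g j)) = ((-(m1 i g)) • (Pi.single i 1 : Fin t → R)) j
    rw [Pi.smul_apply]
    rcases eq_or_ne j i with rfl | hne
    · rw [Pi.single_eq_same, Pi.single_eq_same, smul_eq_mul, mul_one]
    · rw [Pi.single_eq_of_ne hne, Pi.single_eq_of_ne hne, map_zero, neg_zero, smul_zero]

lemma Jmap_single (m1 : ∀ i, G1 i →ₗ[R] R) (i j : Fin t) (g : G1 i) :
    Jmap m1 j ((0 : F1'), Pi.single i g)
      = (-(m1 i g)) • Zmap j (ehat (R := R) (F1' := F1') i) := by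
  rw [Jmap, LinearMap.comp_apply, Emap_single, map_smul]

lemma Jmap_left (m1 : ∀ i, G1 i →ₗ[R] R) (j : Fin t) (f : F1') :
    Jmap m1 j (f, (0 : ∀ i, G1 i)) = (f, 0) := by
  rw [Jmap, LinearMap.comp_apply, Emap_left, Zmap_apply]
  refine Prod.ext rfl ?_
  simp

lemma Emap_eq_J (m1 : ∀ i, G1 i →ₗ[R] R) (i : Fin t) (z : F1' × (∀ i, G1 i)) :
    Emap m1 z = Jmap m1 i z - (m1 i (z.2 i)) • ehat (R := R) (F1' := F1') i := by
  rw [Jmap, LinearMap.comp_apply, Zmap_apply]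
  refine Prod.ext ?_ ?_
  · show z.1 = z.1 - m1 i (z.2 i) • (0 : F1')
    rw [smul_zero, sub_zero]
  · show (Emap m1 z).2 = ((Emap m1 z).2 - Pi.single i ((Emap m1 z).2 i))
        - m1 i (z.2 i) • (Pi.single i 1 : Fin t → R)
    rw [← single_eq_smul]
    have h1 : (Emap m1 z).2 i = -(m1 i (z.2 i)) := rfl
    rw [h1, Pi.single_neg]
    abel

/-- linear-map version of `Tl2`. -/
def Tl2Lin (d2 : F2 →ₗ[R] (F1' × (Fin t → R))) (q1 : ∀ i, F2 →ₗ[R] G1 i)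
    (m2 : ∀ i, G2 i →ₗ[R] G1 i) :
    (F2 × (∀ i, G2 i)) →ₗ[R] (F1' × (∀ i, G1 i)) where
  toFun := Tl2 d2 q1 m2
  map_add' x y := by
    unfold Tl2
    refine Prod.ext ?_ (funext fun i => ?_)
    · show (d2 (x.1 + y.1)).1 = (d2 x.1).1 + (d2 y.1).1
      rw [map_add]; rfl
    · show -q1 i (x.1 + y.1) + m2 i (x.2 i + y.2 i)
          = (-q1 i x.1 + m2 i (x.2 i)) + (-q1 i y.1 + m2 i (y.2 i))
      rw [map_add, map_add]; abel
  map_smul' c x := by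
    unfold Tl2
    refine Prod.ext ?_ (funext fun i => ?_)
    · show (d2 (c • x.1)).1 = c • (d2 x.1).1
      rw [map_smul]; rfl
    · show -q1 i (c • x.1) + m2 i (c • x.2 i) = c • (-q1 i x.1 + m2 i (x.2 i))
      rw [map_smul, map_smul, smul_add, smul_neg]

@[simp] lemma Tl2Lin_apply (d2 : F2 →ₗ[R] (F1' × (Fin t → R))) (q1 : ∀ i, F2 →ₗ[R] G1 i)
    (m2 : ∀ i, G2 i →ₗ[R] G1 i) (w : F2 × (∀ i, G2 i)) :
    Tl2Lin d2 q1 m2 w = Tl2 d2 q1 m2 w := rfl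

/-- linear-map version of `Tl3`. -/
def Tl3Lin (d3 : F3 →ₗ[R] F2) (q2 : ∀ i, F3 →ₗ[R] G2 i)
    (m3 : ∀ i, G3 i →ₗ[R] G2 i) :
    (F3 × (∀ i, G3 i)) →ₗ[R] (F2 × (∀ i, G2 i)) where
  toFun := Tl3 d3 q2 m3
  map_add' x y := by
    unfold Tl3
    refine Prod.ext ?_ (funext fun i => ?_)
    · show d3 (x.1 + y.1) = d3 x.1 + d3 y.1
      rw [map_add]
    · show q2 i (x.1 + y.1) + m3 i (x.2 i + y.2 i)
          = (q2 i x.1 + m3 i (x.2 i)) + (q2 i y.1 + m3 i (y.2 i))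
      rw [map_add, map_add]; abel
  map_smul' c x := by
    unfold Tl3
    refine Prod.ext ?_ (funext fun i => ?_)
    · show d3 (c • x.1) = c • d3 x.1
      rw [map_smul]
    · show q2 i (c • x.1) + m3 i (c • x.2 i) = c • (q2 i x.1 + m3 i (x.2 i))
      rw [map_smul, map_smul, smul_add]

@[simp] lemma Tl3Lin_apply (d3 : F3 →ₗ[R] F2) (q2 : ∀ i, F3 →ₗ[R] G2 i)
    (m3 : ∀ i, G3 i →ₗ[R] G2 i) (u : F3 × (∀ i, G3 i)) :
    Tl3Lin d3 q2 m3 u = Tl3 d3 q2 m3 u := rfl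

lemma Tl1_eq (d1 : (F1' × (Fin t → R)) →ₗ[R] R) (m1 : ∀ i, G1 i →ₗ[R] R)
    (z : F1' × (∀ i, G1 i)) : Tl1 d1 m1 z = d1 (Emap m1 z) := by
  unfold Tl1
  have hsplit : Emap m1 z = (z.1, (0 : Fin t → R)) +
      ((LinearMap.inr R F1' (Fin t → R)) ((Emap m1 z).2)) := by
    refine Prod.ext ?_ ?_
    · show z.1 = z.1 + 0
      rw [add_zero]
    · show (Emap m1 z).2 = 0 + (Emap m1 z).2
      rw [zero_add]
  rw [hsplit, map_add]
  rw [show (Emap m1 z).2 = ∑ i, Pi.single i ((Emap m1 z).2 i) from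
    (Finset.univ_sum_single _).symm, map_sum, map_sum]
  rw [sub_eq_add_neg]
  congr 1
  rw [← Finset.sum_neg_distrib]
  refine Finset.sum_congr rfl (fun i _ => ?_)
  rw [show Pi.single i ((Emap m1 z).2 i) = -((m1 i (z.2 i)) • (Pi.single i 1 : Fin t → R)) by
    rw [show (Emap m1 z).2 i = -(m1 i (z.2 i)) from rfl, Pi.single_neg, single_eq_smul]]
  rw [map_neg, map_neg, map_smul, map_smul, smul_eq_mul]
  rfl

/-- the bilinear map `q1ⁱ(μ11 (Z a) (Z b))`, which takes values in `ker m1 i`. -/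
def kappa (q1 : ∀ i, F2 →ₗ[R] G1 i)
    (μ11 : (F1' × (Fin t → R)) →ₗ[R] (F1' × (Fin t → R)) →ₗ[R] F2) (i : Fin t) :
    (F1' × (Fin t → R)) →ₗ[R] (F1' × (Fin t → R)) →ₗ[R] G1 i :=
  LinearMap.mk₂ R (fun a b => q1 i (μ11 (Zmap i a) (Zmap i b)))
    (fun a a' b => by simp only [map_add, LinearMap.add_apply])
    (fun c a b => by simp only [map_smul, LinearMap.smul_apply])
    (fun a b b' => by simp only [map_add, LinearMap.add_apply])
    (fun c a b => by simp only [map_smul, LinearMap.smul_apply])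

@[simp] lemma kappa_apply (q1 : ∀ i, F2 →ₗ[R] G1 i)
    (μ11 : (F1' × (Fin t → R)) →ₗ[R] (F1' × (Fin t → R)) →ₗ[R] F2) (i : Fin t)
    (a b : F1' × (Fin t → R)) :
    kappa q1 μ11 i a b = q1 i (μ11 (Zmap i a) (Zmap i b)) := rfl

/-- the bilinear map `σᵢ(a, h) = d1 (Z a) • h - m1 h • q1ⁱ(μ11 (Z a) êᵢ)`. -/
def sigma (d1 : (F1' × (Fin t → R)) →ₗ[R] R) (m1 : ∀ i, G1 i →ₗ[R] R)
    (q1 : ∀ i, F2 →ₗ[R] G1 i)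
    (μ11 : (F1' × (Fin t → R)) →ₗ[R] (F1' × (Fin t → R)) →ₗ[R] F2) (i : Fin t) :
    (F1' × (Fin t → R)) →ₗ[R] G1 i →ₗ[R] G1 i :=
  LinearMap.mk₂ R
    (fun a h => d1 (Zmap i a) • h - m1 i h • q1 i (μ11 (Zmap i a) (ehat i)))
    (fun a a' h => by
      simp only [map_add, LinearMap.add_apply, add_smul, smul_add]
      module)
    (fun c a h => by
      simp only [map_smul, LinearMap.smul_apply, smul_eq_mul]
      module)
    (fun a h h' => by
      simp only [map_add, add_smul, smul_add]
      module)
    (fun c a h => by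
      simp only [map_smul, smul_eq_mul]
      module)

@[simp] lemma sigma_apply (d1 : (F1' × (Fin t → R)) →ₗ[R] R) (m1 : ∀ i, G1 i →ₗ[R] R)
    (q1 : ∀ i, F2 →ₗ[R] G1 i)
    (μ11 : (F1' × (Fin t → R)) →ₗ[R] (F1' × (Fin t → R)) →ₗ[R] F2) (i : Fin t)
    (a : F1' × (Fin t → R)) (h : G1 i) :
    sigma d1 m1 q1 μ11 i a h
      = d1 (Zmap i a) • h - m1 i h • q1 i (μ11 (Zmap i a) (ehat i)) := rfl

/-- the product `T₁ ⊗ T₁ → T₂`. -/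
def t11Map (d1 : (F1' × (Fin t → R)) →ₗ[R] R) (m1 : ∀ i, G1 i →ₗ[R] R)
    (μ11 : (F1' × (Fin t → R)) →ₗ[R] (F1' × (Fin t → R)) →ₗ[R] F2)
    (γ11 : ∀ i, G1 i →ₗ[R] G1 i →ₗ[R] G2 i)
    (θL : ∀ i, (F1' × (Fin t → R)) →ₗ[R] (F1' × (Fin t → R)) →ₗ[R] G2 i)
    (σL : ∀ i, (F1' × (Fin t → R)) →ₗ[R] G1 i →ₗ[R] G2 i) :
    (F1' × (∀ i, G1 i)) →ₗ[R] (F1' × (∀ i, G1 i)) →ₗ[R] (F2 × (∀ i, G2 i)) :=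
  LinearMap.mk₂ R
    (fun z z' => (μ11 (Emap m1 z) (Emap m1 z'),
      fun i => -(d1 (ehat i)) • γ11 i (z.2 i) (z'.2 i)
        + (θL i (Jmap m1 i z) (Jmap m1 i z') - θL i (Jmap m1 i z') (Jmap m1 i z))
        + (σL i (Jmap m1 i z) (z'.2 i) - σL i (Jmap m1 i z') (z.2 i))))
    (fun x y z' => by
      refine Prod.ext ?_ (funext fun i => ?_)
      · simp only [map_add, LinearMap.add_apply, Prod.fst_add]
      · simp only [Prod.snd_add, Pi.add_apply, map_add, LinearMap.add_apply, smul_add]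
        module)
    (fun c x z' => by
      refine Prod.ext ?_ (funext fun i => ?_)
      · simp only [map_smul, LinearMap.smul_apply, Prod.smul_fst]
      · simp only [Prod.smul_snd, Pi.smul_apply, map_smul, LinearMap.smul_apply]
        module)
    (fun x y y' => by
      refine Prod.ext ?_ (funext fun i => ?_)
      · simp only [map_add, LinearMap.add_apply, Prod.fst_add]
      · simp only [Prod.snd_add, Pi.add_apply, map_add, LinearMap.add_apply, smul_add]
        module)
    (fun c x y => by
      refine Prod.ext ?_ (funext fun i => ?_)
      · simp only [map_smul, LinearMap.smul_apply, Prod.smul_fst]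
      · simp only [Prod.smul_snd, Pi.smul_apply, map_smul, LinearMap.smul_apply]
        module)

@[simp] lemma t11Map_fst (d1 : (F1' × (Fin t → R)) →ₗ[R] R) (m1 : ∀ i, G1 i →ₗ[R] R)
    (μ11 : (F1' × (Fin t → R)) →ₗ[R] (F1' × (Fin t → R)) →ₗ[R] F2)
    (γ11 : ∀ i, G1 i →ₗ[R] G1 i →ₗ[R] G2 i)
    (θL : ∀ i, (F1' × (Fin t → R)) →ₗ[R] (F1' × (Fin t → R)) →ₗ[R] G2 i)
    (σL : ∀ i, (F1' × (Fin t → R)) →ₗ[R] G1 i →ₗ[R] G2 i)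
    (z z' : F1' × (∀ i, G1 i)) :
    (t11Map d1 m1 μ11 γ11 θL σL z z').1 = μ11 (Emap m1 z) (Emap m1 z') := rfl

@[simp] lemma t11Map_snd (d1 : (F1' × (Fin t → R)) →ₗ[R] R) (m1 : ∀ i, G1 i →ₗ[R] R)
    (μ11 : (F1' × (Fin t → R)) →ₗ[R] (F1' × (Fin t → R)) →ₗ[R] F2)
    (γ11 : ∀ i, G1 i →ₗ[R] G1 i →ₗ[R] G2 i)
    (θL : ∀ i, (F1' × (Fin t → R)) →ₗ[R] (F1' × (Fin t → R)) →ₗ[R] G2 i)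
    (σL : ∀ i, (F1' × (Fin t → R)) →ₗ[R] G1 i →ₗ[R] G2 i)
    (z z' : F1' × (∀ i, G1 i)) (i : Fin t) :
    (t11Map d1 m1 μ11 γ11 θL σL z z').2 i
      = -(d1 (ehat i)) • γ11 i (z.2 i) (z'.2 i)
        + (θL i (Jmap m1 i z) (Jmap m1 i z') - θL i (Jmap m1 i z') (Jmap m1 i z))
        + (σL i (Jmap m1 i z) (z'.2 i) - σL i (Jmap m1 i z') (z.2 i)) := rfl


end TrimAux

set_option maxHeartbeats 2000000 in
theorem trimming_complex_dg_algebra_structure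
    {R : Type u} [CommRing R] [IsNoetherianRing R] [IsLocalRing R]
    -- regular local ring: the maximal ideal is generated by a regular sequence
    (hreg : ∃ xs : List R, RingTheory.Sequence.IsRegular R xs ∧
      Ideal.span {a | a ∈ xs} = maximalIdeal R)
    (t : ℕ)
    (F1' F2 F3 : Type u)
    [AddCommGroup F1'] [Module R F1'] [Module.Free R F1'] [Module.Finite R F1']
    [AddCommGroup F2] [Module R F2] [Module.Free R F2] [Module.Finite R F2]
    [AddCommGroup F3] [Module R F3] [Module.Free R F3] [Module.Finite R F3]
    (G1 G2 G3 : Fin t → Type u)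
    [∀ i, AddCommGroup (G1 i)] [∀ i, Module R (G1 i)]
    [∀ i, Module.Free R (G1 i)] [∀ i, Module.Finite R (G1 i)]
    [∀ i, AddCommGroup (G2 i)] [∀ i, Module R (G2 i)]
    [∀ i, Module.Free R (G2 i)] [∀ i, Module.Finite R (G2 i)]
    [∀ i, AddCommGroup (G3 i)] [∀ i, Module R (G3 i)]
    [∀ i, Module.Free R (G3 i)] [∀ i, Module.Finite R (G3 i)]
    (I : Ideal R) (𝔞 : Fin t → Ideal R)
    (d1 : (F1' × (Fin t → R)) →ₗ[R] R)
    (d2 : F2 →ₗ[R] (F1' × (Fin t → R)))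
    (d3 : F3 →ₗ[R] F2)
    -- `F` is a free resolution of `R/I`
    (hFres0 : LinearMap.range d1 = I)
    (hFres1 : LinearMap.ker d1 = LinearMap.range d2)
    (hFres2 : LinearMap.ker d2 = LinearMap.range d3)
    (hFres3 : LinearMap.ker d3 = ⊥)
    -- `d₀ⁱ(F₂) ⊆ 𝔞 i e₀ⁱ`
    (ha : ∀ (i : Fin t) (v : F2), (d2 v).2 i ∈ 𝔞 i)
    (m1 : ∀ i, G1 i →ₗ[R] R) (m2 : ∀ i, G2 i →ₗ[R] G1 i) (m3 : ∀ i, G3 i →ₗ[R] G2 i)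
    -- `G^i` is a free resolution of `R/𝔞 i`
    (hGres0 : ∀ i, LinearMap.range (m1 i) = 𝔞 i)
    (hGres1 : ∀ i, LinearMap.ker (m1 i) = LinearMap.range (m2 i))
    (hGres2 : ∀ i, LinearMap.ker (m2 i) = LinearMap.range (m3 i))
    (hGres3 : ∀ i, LinearMap.ker (m3 i) = ⊥)
    -- the comparison maps of the trimming complex
    (q1 : ∀ i, F2 →ₗ[R] G1 i) (q2 : ∀ i, F3 →ₗ[R] G2 i)
    (hq1 : ∀ i v, m1 i (q1 i v) = (d2 v).2 i)
    (hq2 : ∀ i w, m2 i (q2 i w) = q1 i (d3 w))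
    -- DG-algebra structure on `F`
    (μ11 : (F1' × (Fin t → R)) →ₗ[R] (F1' × (Fin t → R)) →ₗ[R] F2)
    (μ12 : (F1' × (Fin t → R)) →ₗ[R] F2 →ₗ[R] F3)
    (hFleib1 : ∀ a b, d2 (μ11 a b) = d1 a • b - d1 b • a)
    (hFalt : ∀ a, μ11 a a = 0)
    (hFskew : ∀ a b, μ11 a b = - μ11 b a)
    (hFleib2 : ∀ a z, d3 (μ12 a z) = d1 a • z - μ11 a (d2 z))
    (hFassoc : ∀ a b c, μ12 c (μ11 a b) = μ12 a (μ11 b c))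
    -- DG-algebra structures on the `G^i`
    (γ11 : ∀ i, G1 i →ₗ[R] G1 i →ₗ[R] G2 i)
    (γ12 : ∀ i, G1 i →ₗ[R] G2 i →ₗ[R] G3 i)
    (hGleib1 : ∀ i a b, m2 i (γ11 i a b) = m1 i a • b - m1 i b • a)
    (hGalt : ∀ i a, γ11 i a a = 0)
    (hGskew : ∀ i a b, γ11 i a b = - γ11 i b a)
    (hGleib2 : ∀ i a c, m3 i (γ12 i a c) = m1 i a • c - γ11 i a (m2 i c))
    (hGassoc : ∀ i a b c, γ12 i c (γ11 i a b) = γ12 i a (γ11 i b c)) :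
    -- conclusion: `T` admits an associative DG-algebra structure with the products of
    -- Theorem 3.2
    ∃ (t11 : (F1' × (∀ i, G1 i)) →ₗ[R] (F1' × (∀ i, G1 i)) →ₗ[R] (F2 × (∀ i, G2 i)))
      (t12 : (F1' × (∀ i, G1 i)) →ₗ[R] (F2 × (∀ i, G2 i)) →ₗ[R] (F3 × (∀ i, G3 i))),
      TrimDGAxioms d1 d2 d3 m1 m2 m3 q1 q2 t11 t12 ∧
      TrimDGFormulas d1 d3 m1 m2 m3 q1 q2 μ11 μ12 γ11 γ12 t11 t12 := by
  classical
  open TrimAux in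
  -- values of `kappa` lie in the image of `m2 i`
  have hκmem : ∀ i (a b : F1' × (Fin t → R)),
      kappa q1 μ11 i a b ∈ LinearMap.range (m2 i) := by
    intro i a b
    rw [← hGres1 i, LinearMap.mem_ker, kappa_apply, hq1, hFleib1]
    have h1 : (Zmap i a).2 i = 0 := Zmap_snd_self i a
    have h2 : (Zmap i b).2 i = 0 := Zmap_snd_self i b
    show (d1 (Zmap i a) • (Zmap i b) - d1 (Zmap i b) • (Zmap i a)).2 i = 0
    simp [Pi.sub_apply, Pi.smul_apply, Prod.smul_snd, h1, h2]
  -- choose the triangular lifts θL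
  have hθ : ∀ i, ∃ θL : (F1' × (Fin t → R)) →ₗ[R] (F1' × (Fin t → R)) →ₗ[R] G2 i,
      ∀ a b, m2 i (θL a b) - m2 i (θL b a)
        = q1 i (μ11 (Zmap i a) (Zmap i b)) := by
    intro i
    have halt : ∀ a, kappa q1 μ11 i a a = 0 := fun a => by
      rw [kappa_apply, hFalt, map_zero]
    obtain ⟨θ, hθS, hθdiff⟩ := exists_triangular_split (kappa q1 μ11 i)
      (LinearMap.range (m2 i)) (hκmem i) halt
    obtain ⟨θLi, hθLi⟩ := exists_bilift (m2 i) θ hθS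
    refine ⟨θLi, fun a b => ?_⟩
    rw [hθLi, hθLi, hθdiff]
    rfl
  choose θL hθL using hθ
  -- choose the lifts σL
  have hσ : ∀ i, ∃ σLi : (F1' × (Fin t → R)) →ₗ[R] G1 i →ₗ[R] G2 i,
      ∀ a h, m2 i (σLi a h) = sigma d1 m1 q1 μ11 i a h := by
    intro i
    apply exists_bilift
    intro a h
    rw [← hGres1 i, LinearMap.mem_ker, sigma_apply, map_sub, map_smul, map_smul,
      hq1, hFleib1]
    have h1 : (Zmap i a).2 i = 0 := Zmap_snd_self i a
    have h2 : (ehat (R := R) (F1' := F1') i).2 i = 1 := Pi.single_eq_same i 1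
    show d1 (Zmap i a) • m1 i h
        - m1 i h • (d1 (Zmap i a) • (ehat i) - d1 (ehat i) • (Zmap i a)).2 i = 0
    simp only [Prod.snd_sub, Prod.smul_snd, Pi.sub_apply, Pi.smul_apply, h1, h2,
      smul_eq_mul, mul_one, mul_zero, sub_zero]
    ring
  choose σL hσL using hσ
  -- the product on T in degree (1,1)
  have hJZ : ∀ (i : Fin t) (z : F1' × (∀ i, G1 i)),
      Zmap i (Jmap m1 i z) = Jmap m1 i z := fun i z => Zmap_idem i (Emap m1 z)
  have hm2t11 : ∀ (z z' : F1' × (∀ i, G1 i)) (i : Fin t),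
      m2 i ((t11Map d1 m1 μ11 γ11 θL σL z z').2 i)
        = q1 i (μ11 (Emap m1 z) (Emap m1 z'))
          + d1 (Emap m1 z) • z'.2 i - d1 (Emap m1 z') • z.2 i := by
    intro z z' i
    rw [t11Map_snd, map_add, map_add, map_sub, map_sub, map_smul,
      hGleib1, hθL, hσL, hσL, sigma_apply, sigma_apply, hJZ, hJZ]
    conv_rhs => rw [Emap_eq_J m1 i z, Emap_eq_J m1 i z']
    simp only [map_sub, map_smul, LinearMap.sub_apply, LinearMap.smul_apply,
      smul_eq_mul]
    rw [hFalt (ehat i)]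
    rw [hFskew (ehat (R := R) (F1' := F1') i) (Jmap m1 i z')]
    simp only [map_zero, map_neg, smul_zero, sub_zero, mul_zero, smul_neg]
    module
  have hA1 : ∀ z z', Tl2 d2 q1 m2 (t11Map d1 m1 μ11 γ11 θL σL z z')
      = Tl1 d1 m1 z • z' - Tl1 d1 m1 z' • z := by
    intro z z'
    refine Prod.ext ?_ (funext fun i => ?_)
    · show (d2 ((t11Map d1 m1 μ11 γ11 θL σL z z').1)).1
        = (Tl1 d1 m1 z • z' - Tl1 d1 m1 z' • z).1
      rw [t11Map_fst, hFleib1, Tl1_eq, Tl1_eq]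
      rfl
    · show -q1 i ((t11Map d1 m1 μ11 γ11 θL σL z z').1)
          + m2 i ((t11Map d1 m1 μ11 γ11 θL σL z z').2 i)
        = (Tl1 d1 m1 z • z' - Tl1 d1 m1 z' • z).2 i
      rw [t11Map_fst, hm2t11, Tl1_eq, Tl1_eq]
      show _ = d1 (Emap m1 z) • z'.2 i - d1 (Emap m1 z') • z.2 i
      abel
  have hA2 : ∀ z, t11Map d1 m1 μ11 γ11 θL σL z z = 0 := by
    intro z
    refine Prod.ext ?_ (funext fun i => ?_)
    · show μ11 (Emap m1 z) (Emap m1 z) = (0 : F2 × (∀ i, G2 i)).1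
      rw [hFalt]
      rfl
    · rw [t11Map_snd, hGalt]
      show -(d1 (ehat i)) • (0 : G2 i) + _ + _ = (0 : F2 × (∀ i, G2 i)).2 i
      rw [smul_zero, sub_self, sub_self, add_zero, add_zero]
      rfl
  have hA3 : ∀ z z', t11Map d1 m1 μ11 γ11 θL σL z z'
      = - t11Map d1 m1 μ11 γ11 θL σL z' z := by
    intro z z'
    refine Prod.ext ?_ (funext fun i => ?_)
    · show μ11 (Emap m1 z) (Emap m1 z')
        = (-(t11Map d1 m1 μ11 γ11 θL σL z' z)).1
      rw [hFskew]
      show _ = -((t11Map d1 m1 μ11 γ11 θL σL z' z).1)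
      rw [t11Map_fst]
    · rw [t11Map_snd]
      show _ = (-(t11Map d1 m1 μ11 γ11 θL σL z' z)).2 i
      have h2 : (-(t11Map d1 m1 μ11 γ11 θL σL z' z)).2 i
          = -((t11Map d1 m1 μ11 γ11 θL σL z' z).2 i) := rfl
      rw [h2, t11Map_snd, hGskew i (z.2 i) (z'.2 i)]
      module
  -- basic consequences of exactness
  have hm1m2 : ∀ (i : Fin t) (c : G2 i), m1 i (m2 i c) = 0 := by
    intro i c
    have : m2 i c ∈ LinearMap.ker (m1 i) := by
      rw [hGres1]; exact ⟨c, rfl⟩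
    exact this
  have hd1d2 : ∀ x : F2, d1 (d2 x) = 0 := by
    intro x
    have : d2 x ∈ LinearMap.ker d1 := by
      rw [hFres1]; exact ⟨x, rfl⟩
    exact this
  -- `Tl3` is injective
  have hinj : Function.Injective (Tl3Lin d3 q2 m3) := by
    rw [← LinearMap.ker_eq_bot]
    rw [Submodule.eq_bot_iff]
    rintro ⟨x, y⟩ hu
    rw [LinearMap.mem_ker] at hu
    have h1 : d3 x = 0 := congrArg Prod.fst hu
    have hx : x = 0 := by
      have hh : x ∈ LinearMap.ker d3 := h1
      rwa [hFres3, Submodule.mem_bot] at hh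
    subst hx
    have h2 : ∀ i, q2 i 0 + m3 i (y i) = 0 := fun i => congrFun (congrArg Prod.snd hu) i
    refine Prod.ext rfl (funext fun i => ?_)
    have h3 : m3 i (y i) = 0 := by
      have hh := h2 i
      rwa [map_zero, zero_add] at hh
    have hh : y i ∈ LinearMap.ker (m3 i) := h3
    rwa [hGres3 i, Submodule.mem_bot] at hh
  -- range of `Tl3` is the kernel of `Tl2`
  have hrange : ∀ w : F2 × (∀ i, G2 i), Tl2Lin d2 q1 m2 w = 0 →
      w ∈ LinearMap.range (Tl3Lin d3 q2 m3) := by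
    rintro ⟨x, y⟩ hw
    have h1 : (d2 x).1 = 0 := congrArg Prod.fst hw
    have h2 : ∀ i, - q1 i x + m2 i (y i) = 0 := fun i => congrFun (congrArg Prod.snd hw) i
    have h3 : ∀ i, q1 i x = m2 i (y i) := fun i => neg_add_eq_zero.mp (h2 i)
    have hd2x : d2 x = 0 := by
      refine Prod.ext h1 (funext fun i => ?_)
      show (d2 x).2 i = 0
      rw [← hq1, h3, hm1m2]
    have hx : x ∈ LinearMap.ker d2 := hd2x
    rw [hFres2] at hx
    obtain ⟨u1, hu1⟩ := hx
    have hyi : ∀ i, ∃ v, m3 i v = y i - q2 i u1 := by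
      intro i
      have hh : y i - q2 i u1 ∈ LinearMap.ker (m2 i) := by
        rw [LinearMap.mem_ker, map_sub, hq2, hu1, ← h3, sub_self]
      rwa [hGres2 i] at hh
    choose v hv using hyi
    refine ⟨(u1, v), ?_⟩
    refine Prod.ext hu1 (funext fun i => ?_)
    show q2 i u1 + m3 i (v i) = y i
    rw [hv, add_sub_cancel]
  -- `E` intertwines `Tl2` with `d2`
  have hETl2 : ∀ w : F2 × (∀ i, G2 i), Emap m1 (Tl2Lin d2 q1 m2 w) = d2 w.1 := by
    intro w
    refine Prod.ext rfl (funext fun i => ?_)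
    show -(m1 i (- q1 i w.1 + m2 i (w.2 i))) = (d2 w.1).2 i
    rw [map_add, map_neg, hq1, hm1m2, add_zero, neg_neg]
  -- the putative values of `t12` land in the range of `Tl3`
  have hΦmem : ∀ (z : F1' × (∀ i, G1 i)) (w : F2 × (∀ i, G2 i)),
      d1 (Emap m1 z) • w - t11Map d1 m1 μ11 γ11 θL σL z (Tl2Lin d2 q1 m2 w)
        ∈ LinearMap.range (Tl3Lin d3 q2 m3) := by
    intro z w
    apply hrange
    rw [map_sub, map_smul]
    rw [show Tl2Lin d2 q1 m2 (t11Map d1 m1 μ11 γ11 θL σL z (Tl2Lin d2 q1 m2 w))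
        = Tl2 d2 q1 m2 (t11Map d1 m1 μ11 γ11 θL σL z (Tl2Lin d2 q1 m2 w)) from rfl]
    rw [hA1 z (Tl2Lin d2 q1 m2 w), Tl1_eq, Tl1_eq, hETl2, hd1d2, zero_smul, sub_zero]
    rw [show Tl2Lin d2 q1 m2 w = Tl2 d2 q1 m2 w from rfl]
    abel
  letI eqv : (F3 × (∀ i, G3 i)) ≃ₗ[R] LinearMap.range (Tl3Lin d3 q2 m3) :=
    LinearEquiv.ofInjective _ hinj
  set t12M : (F1' × (∀ i, G1 i)) →ₗ[R] (F2 × (∀ i, G2 i)) →ₗ[R] (F3 × (∀ i, G3 i)) :=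
    LinearMap.mk₂ R (fun z w => eqv.symm
      ⟨d1 (Emap m1 z) • w - t11Map d1 m1 μ11 γ11 θL σL z (Tl2Lin d2 q1 m2 w), hΦmem z w⟩)
      (fun z z' w => by
        rw [← map_add]
        refine congrArg eqv.symm (Subtype.ext ?_)
        show d1 (Emap m1 (z + z')) • w
            - t11Map d1 m1 μ11 γ11 θL σL (z + z') (Tl2Lin d2 q1 m2 w) = _
        rw [show ((⟨_, hΦmem z w⟩ + ⟨_, hΦmem z' w⟩ :
          LinearMap.range (Tl3Lin d3 q2 m3)) : LinearMap.range (Tl3Lin d3 q2 m3)).val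
            = (d1 (Emap m1 z) • w - t11Map d1 m1 μ11 γ11 θL σL z (Tl2Lin d2 q1 m2 w))
            + (d1 (Emap m1 z') • w - t11Map d1 m1 μ11 γ11 θL σL z' (Tl2Lin d2 q1 m2 w))
          from rfl]
        simp only [map_add, LinearMap.add_apply, add_smul]
        abel)
      (fun c z w => by
        rw [← map_smul]
        refine congrArg eqv.symm (Subtype.ext ?_)
        show d1 (Emap m1 (c • z)) • w
            - t11Map d1 m1 μ11 γ11 θL σL (c • z) (Tl2Lin d2 q1 m2 w) = _
        rw [show ((c • (⟨_, hΦmem z w⟩ :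
            LinearMap.range (Tl3Lin d3 q2 m3)))).val
            = c • (d1 (Emap m1 z) • w - t11Map d1 m1 μ11 γ11 θL σL z (Tl2Lin d2 q1 m2 w))
          from rfl]
        simp only [map_smul, LinearMap.smul_apply, smul_eq_mul]
        module)
      (fun z w w' => by
        rw [← map_add]
        refine congrArg eqv.symm (Subtype.ext ?_)
        show d1 (Emap m1 z) • (w + w')
            - t11Map d1 m1 μ11 γ11 θL σL z (Tl2Lin d2 q1 m2 (w + w')) = _
        rw [show ((⟨_, hΦmem z w⟩ + ⟨_, hΦmem z w'⟩ :
          LinearMap.range (Tl3Lin d3 q2 m3)) : LinearMap.range (Tl3Lin d3 q2 m3)).val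
            = (d1 (Emap m1 z) • w - t11Map d1 m1 μ11 γ11 θL σL z (Tl2Lin d2 q1 m2 w))
            + (d1 (Emap m1 z) • w' - t11Map d1 m1 μ11 γ11 θL σL z (Tl2Lin d2 q1 m2 w'))
          from rfl]
        simp only [map_add, smul_add]
        abel)
      (fun c z w => by
        rw [← map_smul]
        refine congrArg eqv.symm (Subtype.ext ?_)
        show d1 (Emap m1 z) • (c • w)
            - t11Map d1 m1 μ11 γ11 θL σL z (Tl2Lin d2 q1 m2 (c • w)) = _
        rw [show ((c • (⟨_, hΦmem z w⟩ :
            LinearMap.range (Tl3Lin d3 q2 m3)))).val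
            = c • (d1 (Emap m1 z) • w - t11Map d1 m1 μ11 γ11 θL σL z (Tl2Lin d2 q1 m2 w))
          from rfl]
        simp only [map_smul, smul_sub]
        module)
    with ht12M
  have key : ∀ z w, Tl3Lin d3 q2 m3 (t12M z w)
      = d1 (Emap m1 z) • w - t11Map d1 m1 μ11 γ11 θL σL z (Tl2Lin d2 q1 m2 w) := by
    intro z w
    have h1 := eqv.apply_symm_apply
      ⟨d1 (Emap m1 z) • w - t11Map d1 m1 μ11 γ11 θL σL z (Tl2Lin d2 q1 m2 w), hΦmem z w⟩
    have h2 := congrArg Subtype.val h1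
    rw [show (eqv (eqv.symm ⟨d1 (Emap m1 z) • w
        - t11Map d1 m1 μ11 γ11 θL σL z (Tl2Lin d2 q1 m2 w), hΦmem z w⟩)).val
      = Tl3Lin d3 q2 m3 (eqv.symm ⟨d1 (Emap m1 z) • w
        - t11Map d1 m1 μ11 γ11 θL σL z (Tl2Lin d2 q1 m2 w), hΦmem z w⟩) from rfl] at h2
    exact h2
  have hA4 : ∀ z w, Tl3 d3 q2 m3 (t12M z w)
      = Tl1 d1 m1 z • w - t11Map d1 m1 μ11 γ11 θL σL z (Tl2 d2 q1 m2 w) := by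
    intro z w
    rw [Tl1_eq]
    exact key z w
  have hA5 : ∀ z z' z'', t12M z'' (t11Map d1 m1 μ11 γ11 θL σL z z')
      = t12M z (t11Map d1 m1 μ11 γ11 θL σL z' z'') := by
    intro z z' z''
    apply hinj
    rw [key, key]
    rw [show Tl2Lin d2 q1 m2 (t11Map d1 m1 μ11 γ11 θL σL z z')
        = Tl2 d2 q1 m2 (t11Map d1 m1 μ11 γ11 θL σL z z') from rfl,
      show Tl2Lin d2 q1 m2 (t11Map d1 m1 μ11 γ11 θL σL z' z'')
        = Tl2 d2 q1 m2 (t11Map d1 m1 μ11 γ11 θL σL z' z'') from rfl,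
      hA1 z z', hA1 z' z'']
    simp only [map_sub, map_smul, Tl1_eq]
    rw [hA3 z'' z', hA3 z'' z]
    module
  -- first components of t12 are given by μ12
  have ht12fst : ∀ z w, (t12M z w).1 = μ12 (Emap m1 z) w.1 := by
    intro z w
    have h1 : d3 ((t12M z w).1) = (d1 (Emap m1 z) • w
        - t11Map d1 m1 μ11 γ11 θL σL z (Tl2Lin d2 q1 m2 w)).1 := congrArg Prod.fst (key z w)
    have h2 : (d1 (Emap m1 z) • w - t11Map d1 m1 μ11 γ11 θL σL z (Tl2Lin d2 q1 m2 w)).1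
        = d1 (Emap m1 z) • w.1 - μ11 (Emap m1 z) (d2 w.1) := by
      show d1 (Emap m1 z) • w.1 - (t11Map d1 m1 μ11 γ11 θL σL z (Tl2Lin d2 q1 m2 w)).1 = _
      rw [t11Map_fst, hETl2]
    rw [h2, ← hFleib2] at h1
    have h5 : (t12M z w).1 - μ12 (Emap m1 z) w.1 ∈ LinearMap.ker d3 := by
      rw [LinearMap.mem_ker, map_sub, h1, sub_self]
    rwa [hFres3, Submodule.mem_bot, sub_eq_zero] at h5
  -- formula (3)
  have hF3 : ∀ (i : Fin t) (g g' : G1 i),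
      t11Map d1 m1 μ11 γ11 θL σL ((0 : F1'), Pi.single i g) ((0 : F1'), Pi.single i g')
        = (0, Pi.single i (-(d1 (0, Pi.single i 1) • γ11 i g g'))) := by
    intro i g g'
    refine Prod.ext ?_ (funext fun j => ?_)
    · rw [t11Map_fst, Emap_single, Emap_single]
      simp only [map_smul, LinearMap.smul_apply]
      rw [hFalt]
      simp
    · rw [t11Map_snd, Jmap_single, Jmap_single]
      have hθ0 : θL j ((-(m1 i g)) • Zmap j (ehat i)) ((-(m1 i g')) • Zmap j (ehat i))
          - θL j ((-(m1 i g')) • Zmap j (ehat i)) ((-(m1 i g)) • Zmap j (ehat i)) = 0 := by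
        simp only [map_smul, LinearMap.smul_apply, smul_smul]
        rw [mul_comm]
        exact sub_self _
      rw [hθ0]
      dsimp only
      rcases eq_or_ne j i with rfl | hne
      · simp only [ehat, Zmap_ehat', smul_zero, neg_zero, LinearMap.map_zero₂,
          LinearMap.zero_apply, Pi.single_eq_same, sub_self, add_zero, sub_zero,
          zero_sub, map_zero, neg_smul]
      · simp [Pi.single_eq_of_ne hne]
  -- formula (1)
  have hFm1 : ∀ f f' : F1', ∃ g2 : ∀ i, G2 i,
      (∀ i, m2 i (g2 i) = q1 i (μ11 (f, 0) (f', 0))) ∧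
      t11Map d1 m1 μ11 γ11 θL σL (f, 0) (f', 0) = (μ11 (f, 0) (f', 0), g2) := by
    intro f f'
    refine ⟨(t11Map d1 m1 μ11 γ11 θL σL (f, 0) (f', 0)).2, fun i => ?_, ?_⟩
    · rw [hm2t11, Emap_left, Emap_left]
      dsimp only [Pi.zero_apply]
      rw [smul_zero, smul_zero, add_zero, sub_zero]
    · refine Prod.ext ?_ rfl
      rw [t11Map_fst, Emap_left, Emap_left]
  -- formula (2)
  have hFm2 : ∀ (f : F1') (i : Fin t) (g : G1 i), ∃ g2 : ∀ j, G2 j,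
      (∀ j, m2 j (g2 j) =
        m1 i g • q1 j (μ11 (0, Pi.single i 1) (f, 0)) + Pi.single i (d1 (f, 0) • g) j) ∧
      t11Map d1 m1 μ11 γ11 θL σL (f, 0) ((0 : F1'), Pi.single i g)
        = (m1 i g • μ11 (0, Pi.single i 1) (f, 0), g2) := by
    intro f i g
    refine ⟨(t11Map d1 m1 μ11 γ11 θL σL (f, 0) ((0 : F1'), Pi.single i g)).2,
      fun j => ?_, ?_⟩
    · rw [hm2t11, Emap_left, Emap_single]
      dsimp only
      simp only [map_smul, LinearMap.smul_apply, smul_zero, sub_zero]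
      rw [hFskew (f, (0 : Fin t → R)) (ehat i)]
      simp only [ehat, map_neg, smul_neg, neg_smul, neg_neg, Pi.single_smul, Pi.smul_apply]
      simp
    · refine Prod.ext ?_ rfl
      rw [t11Map_fst, Emap_left, Emap_single]
      dsimp only
      simp only [map_smul, LinearMap.smul_apply]
      rw [hFskew (f, (0 : Fin t → R)) (ehat i)]
      simp only [ehat, map_neg, smul_neg, neg_smul, neg_neg]
  -- formula (4)
  have hFm4 : ∀ (i j : Fin t), i < j → ∀ (g : G1 i) (g' : G1 j), ∃ g2 : ∀ k, G2 k,
      (∀ k, m2 k (g2 k) =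
        (m1 i g * m1 j g') • q1 k (μ11 (0, Pi.single i 1) (0, Pi.single j 1)) +
        Pi.single i ((m1 j g' * d1 (0, Pi.single j 1)) • g) k -
        Pi.single j ((m1 i g * d1 (0, Pi.single i 1)) • g') k) ∧
      t11Map d1 m1 μ11 γ11 θL σL ((0 : F1'), Pi.single i g) ((0 : F1'), Pi.single j g')
        = ((m1 i g * m1 j g') • μ11 (0, Pi.single i 1) (0, Pi.single j 1), g2) := by
    intro i j _hij g g'
    refine ⟨(t11Map d1 m1 μ11 γ11 θL σL ((0 : F1'), Pi.single i g)
      ((0 : F1'), Pi.single j g')).2, fun k => ?_, ?_⟩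
    · rw [hm2t11, Emap_single, Emap_single]
      dsimp only
      simp only [map_neg, map_smul, LinearMap.neg_apply, LinearMap.smul_apply, smul_smul,
        neg_neg, neg_smul, smul_eq_mul, ehat, Pi.single_smul, Pi.smul_apply]
      module
    · refine Prod.ext ?_ rfl
      rw [t11Map_fst, Emap_single, Emap_single]
      dsimp only
      simp only [map_neg, map_smul, LinearMap.neg_apply, LinearMap.smul_apply, smul_smul,
        neg_neg, neg_smul, smul_eq_mul, ehat]
      module
  -- formula (5)
  have hFm5 : ∀ (f : F1') (w : F2), ∃ g3 : ∀ i, G3 i,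
      t12M (f, 0) (w, 0) = (μ12 (f, 0) w, g3) := by
    intro f w
    refine ⟨(t12M (f, 0) (w, 0)).2, ?_⟩
    refine Prod.ext ?_ rfl
    rw [ht12fst, Emap_left]
  -- formula (6)
  have hFm6 : ∀ (f : F1') (i : Fin t) (c : G2 i), ∃ g3 : ∀ j, G3 j,
      t12M (f, 0) ((0 : F2), Pi.single i c) = (0, g3) := by
    intro f i c
    refine ⟨(t12M (f, 0) ((0 : F2), Pi.single i c)).2, ?_⟩
    refine Prod.ext ?_ rfl
    rw [ht12fst]
    dsimp only
    rw [map_zero]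
  -- formula (8)
  have hFm8 : ∀ (i j : Fin t), i ≠ j → ∀ (g : G1 i) (c : G2 j), ∃ g3 : ∀ k, G3 k,
      t12M ((0 : F1'), Pi.single i g) ((0 : F2), Pi.single j c) = (0, g3) := by
    intro i j _hij g c
    refine ⟨(t12M ((0 : F1'), Pi.single i g) ((0 : F2), Pi.single j c)).2, ?_⟩
    refine Prod.ext ?_ rfl
    rw [ht12fst]
    dsimp only
    rw [map_zero]
  -- formula (9)
  have hFm9 : ∀ (i : Fin t) (g : G1 i) (w : F2), ∃ g3 : ∀ j, G3 j,
      t12M ((0 : F1'), Pi.single i g) (w, 0)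
        = (-(m1 i g) • μ12 (0, Pi.single i 1) w, g3) := by
    intro i g w
    refine ⟨(t12M ((0 : F1'), Pi.single i g) (w, 0)).2, ?_⟩
    refine Prod.ext ?_ rfl
    rw [ht12fst, Emap_single, map_smul]
    simp only [ehat]
    rfl
  -- `Tl2` on a single `G₂`-coordinate
  have hTl2single : ∀ (i : Fin t) (c : G2 i),
      Tl2Lin d2 q1 m2 ((0 : F2), Pi.single i c) = ((0 : F1'), Pi.single i (m2 i c)) := by
    intro i c
    refine Prod.ext ?_ (funext fun j => ?_)
    · show (d2 (0 : F2)).1 = 0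
      rw [map_zero]
      rfl
    · show - q1 j (0 : F2) + m2 j (Pi.single i c j) = Pi.single i (m2 i c) j
      rw [map_zero, neg_zero, zero_add]
      rcases eq_or_ne j i with rfl | hne
      · rw [Pi.single_eq_same, Pi.single_eq_same]
      · rw [Pi.single_eq_of_ne hne, Pi.single_eq_of_ne hne, map_zero]
  -- formula (7)
  have hFm7 : ∀ (i : Fin t) (g : G1 i) (c : G2 i),
      t12M ((0 : F1'), Pi.single i g) ((0 : F2), Pi.single i c)
        = (0, Pi.single i (-(d1 (0, Pi.single i 1) • γ12 i g c))) := by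
    intro i g c
    apply hinj
    rw [key, hTl2single, hF3, Emap_single]
    refine Prod.ext ?_ (funext fun j => ?_)
    · show d1 ((-(m1 i g)) • ehat i) • (0 : F2) - (0 : F2) = d3 0
      rw [smul_zero, sub_zero, map_zero]
    · show d1 ((-(m1 i g)) • ehat i) • Pi.single i c j
          - Pi.single i (-(d1 ((0 : F1'), Pi.single i 1) • γ11 i g (m2 i c))) j
        = q2 j 0 + m3 j (Pi.single i (-(d1 ((0 : F1'), Pi.single i 1) • γ12 i g c)) j)
      rw [map_zero, zero_add]
      rcases eq_or_ne j i with rfl | hne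
      · rw [Pi.single_eq_same, Pi.single_eq_same, Pi.single_eq_same]
        simp only [ehat, map_neg, map_smul, LinearMap.smul_apply, smul_eq_mul]
        rw [hGleib2]
        module
      · rw [Pi.single_eq_of_ne hne, Pi.single_eq_of_ne hne, Pi.single_eq_of_ne hne,
          map_zero, smul_zero, sub_zero]
  -- assemble everything
  exact ⟨t11Map d1 m1 μ11 γ11 θL σL, t12M,
    ⟨hA1, hA2, hA3, hA4, hA5⟩,
    hFm1, hFm2, hF3, hFm4, hFm5, hFm6, hFm7, hFm8, hFm9⟩
end

section
/- Adopt the iterated trimming setup with F_• and each G_•^i length-3 minimal DG-algebras, and equip T_• with the DG-algebra structure of the main theorem. Then the k-linear map T̄_• → F̄_• defined by f̄_i ↦ f̄_i for f_i ∈ F_i and ḡ_i^j ↦ 0 for g_i^j ∈ G_i^j is a homomorphism of graded k-algebras, where bars denote − ⊗_R k. -/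
open IsLocalRing

/-!
STATEMENT 5 (Corollary 3.4, second part): in the length-3 iterated trimming setup with
`F_•` and the `G^i_•` minimal DG-algebras, equip `T` with the DG-algebra structure of
Theorem 3.2.  Then the map `T̄_• → F̄_•` sending `f̄ᵢ ↦ f̄ᵢ` and `ḡᵢʲ ↦ 0` is a
homomorphism of graded `k`-algebras.  Concretely (identifying `T̄ₙ = Tₙ/𝔪Tₙ` and
`F̄ₙ = Fₙ/𝔪Fₙ`), the map is induced by the projections `T₁ → F₁' ⊆ F₁`, `T₂ → F₂`,
`T₃ → F₃`; being `k`-linear and degree-preserving, the homomorphism property is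
exactly multiplicativity modulo `𝔪`, stated below for both products.
-/
universe u

set_option maxHeartbeats 2000000 in
theorem trimming_complex_projection_is_algebra_map
    {R : Type u} [CommRing R] [IsNoetherianRing R] [IsLocalRing R]
    -- regular local ring: the maximal ideal is generated by a regular sequence
    (hreg : ∃ xs : List R, RingTheory.Sequence.IsRegular R xs ∧
      Ideal.span {a | a ∈ xs} = maximalIdeal R)
    (t : ℕ)
    (F1' F2 F3 : Type u)
    [AddCommGroup F1'] [Module R F1'] [Module.Free R F1'] [Module.Finite R F1']
    [AddCommGroup F2] [Module R F2] [Module.Free R F2] [Module.Finite R F2]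
    [AddCommGroup F3] [Module R F3] [Module.Free R F3] [Module.Finite R F3]
    (G1 G2 G3 : Fin t → Type u)
    [∀ i, AddCommGroup (G1 i)] [∀ i, Module R (G1 i)]
    [∀ i, Module.Free R (G1 i)] [∀ i, Module.Finite R (G1 i)]
    [∀ i, AddCommGroup (G2 i)] [∀ i, Module R (G2 i)]
    [∀ i, Module.Free R (G2 i)] [∀ i, Module.Finite R (G2 i)]
    [∀ i, AddCommGroup (G3 i)] [∀ i, Module R (G3 i)]
    [∀ i, Module.Free R (G3 i)] [∀ i, Module.Finite R (G3 i)]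
    (I : Ideal R) (𝔞 : Fin t → Ideal R)
    (d1 : (F1' × (Fin t → R)) →ₗ[R] R)
    (d2 : F2 →ₗ[R] (F1' × (Fin t → R)))
    (d3 : F3 →ₗ[R] F2)
    -- `F` is a free resolution of `R/I`
    (hFres0 : LinearMap.range d1 = I)
    (hFres1 : LinearMap.ker d1 = LinearMap.range d2)
    (hFres2 : LinearMap.ker d2 = LinearMap.range d3)
    (hFres3 : LinearMap.ker d3 = ⊥)
    -- `d₀ⁱ(F₂) ⊆ 𝔞 i e₀ⁱ`
    (ha : ∀ (i : Fin t) (v : F2), (d2 v).2 i ∈ 𝔞 i)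
    (m1 : ∀ i, G1 i →ₗ[R] R) (m2 : ∀ i, G2 i →ₗ[R] G1 i) (m3 : ∀ i, G3 i →ₗ[R] G2 i)
    -- `G^i` is a free resolution of `R/𝔞 i`
    (hGres0 : ∀ i, LinearMap.range (m1 i) = 𝔞 i)
    (hGres1 : ∀ i, LinearMap.ker (m1 i) = LinearMap.range (m2 i))
    (hGres2 : ∀ i, LinearMap.ker (m2 i) = LinearMap.range (m3 i))
    (hGres3 : ∀ i, LinearMap.ker (m3 i) = ⊥)
    -- the comparison maps of the trimming complex
    (q1 : ∀ i, F2 →ₗ[R] G1 i) (q2 : ∀ i, F3 →ₗ[R] G2 i)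
    (hq1 : ∀ i v, m1 i (q1 i v) = (d2 v).2 i)
    (hq2 : ∀ i w, m2 i (q2 i w) = q1 i (d3 w))
    -- DG-algebra structure on `F`
    (μ11 : (F1' × (Fin t → R)) →ₗ[R] (F1' × (Fin t → R)) →ₗ[R] F2)
    (μ12 : (F1' × (Fin t → R)) →ₗ[R] F2 →ₗ[R] F3)
    (hFleib1 : ∀ a b, d2 (μ11 a b) = d1 a • b - d1 b • a)
    (hFalt : ∀ a, μ11 a a = 0)
    (hFskew : ∀ a b, μ11 a b = - μ11 b a)
    (hFleib2 : ∀ a z, d3 (μ12 a z) = d1 a • z - μ11 a (d2 z))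
    (hFassoc : ∀ a b c, μ12 c (μ11 a b) = μ12 a (μ11 b c))
    -- DG-algebra structures on the `G^i`
    (γ11 : ∀ i, G1 i →ₗ[R] G1 i →ₗ[R] G2 i)
    (γ12 : ∀ i, G1 i →ₗ[R] G2 i →ₗ[R] G3 i)
    (hGleib1 : ∀ i a b, m2 i (γ11 i a b) = m1 i a • b - m1 i b • a)
    (hGalt : ∀ i a, γ11 i a a = 0)
    (hGskew : ∀ i a b, γ11 i a b = - γ11 i b a)
    (hGleib2 : ∀ i a c, m3 i (γ12 i a c) = m1 i a • c - γ11 i a (m2 i c))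
    (hGassoc : ∀ i a b c, γ12 i c (γ11 i a b) = γ12 i a (γ11 i b c))
    -- minimality of `F` and the `G^i`
    (hminF1 : ∀ a, d1 a ∈ maximalIdeal R)
    (hminF2 : ∀ v, d2 v ∈ maximalIdeal R • (⊤ : Submodule R (F1' × (Fin t → R))))
    (hminF3 : ∀ w, d3 w ∈ maximalIdeal R • (⊤ : Submodule R F2))
    (hminG1 : ∀ i g, m1 i g ∈ maximalIdeal R)
    (hminG2 : ∀ i c, m2 i c ∈ maximalIdeal R • (⊤ : Submodule R (G1 i)))
    (hminG3 : ∀ i u, m3 i u ∈ maximalIdeal R • (⊤ : Submodule R (G2 i)))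
    -- `T` carries the DG-algebra structure of Theorem 3.2
    (t11 : (F1' × (∀ i, G1 i)) →ₗ[R] (F1' × (∀ i, G1 i)) →ₗ[R] (F2 × (∀ i, G2 i)))
    (t12 : (F1' × (∀ i, G1 i)) →ₗ[R] (F2 × (∀ i, G2 i)) →ₗ[R] (F3 × (∀ i, G3 i)))
    (hax : TrimDGAxioms d1 d2 d3 m1 m2 m3 q1 q2 t11 t12)
    (hform : TrimDGFormulas d1 d3 m1 m2 m3 q1 q2 μ11 μ12 γ11 γ12 t11 t12) :
    -- conclusion: the projection `T̄ → F̄`, `f̄ ↦ f̄`, `ḡ ↦ 0`, is multiplicative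
    -- modulo `𝔪`, i.e. a homomorphism of graded `k`-algebras
    (∀ z z' : F1' × (∀ i, G1 i),
      (t11 z z').1 - μ11 (z.1, 0) (z'.1, 0) ∈ maximalIdeal R • (⊤ : Submodule R F2)) ∧
    (∀ (z : F1' × (∀ i, G1 i)) (w : F2 × (∀ i, G2 i)),
      (t12 z w).1 - μ12 (z.1, 0) w.1 ∈ maximalIdeal R • (⊤ : Submodule R F3)) := by
    classical
  -- abbreviations for the target submodules
  set M2 : Submodule R F2 := maximalIdeal R • (⊤ : Submodule R F2) with hM2
  set M3 : Submodule R F3 := maximalIdeal R • (⊤ : Submodule R F3) with hM3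
  obtain ⟨h1, h2, h3, h4, h5, h6, h7, h8, h9⟩ := hform
  have hskew : ∀ z z', t11 z z' = - t11 z' z := hax.2.2.1
  -- decomposition of an element of T₁
  have hdec1 : ∀ z : F1' × (∀ i, G1 i),
      z = (z.1, (0 : ∀ i, G1 i)) + ∑ i, ((0 : F1'), Pi.single i (z.2 i)) := by
    intro z
    have h1' : (∑ i, ((0 : F1'), Pi.single i (z.2 i)) : F1' × (∀ i, G1 i)).1 = 0 := by
      rw [show ((∑ i, ((0 : F1'), Pi.single i (z.2 i)) : F1' × (∀ i, G1 i)).1)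
        = (LinearMap.fst R F1' (∀ i, G1 i)) (∑ i, ((0 : F1'), Pi.single i (z.2 i))) from rfl,
        map_sum]
      simp
    have h2' : (∑ i, ((0 : F1'), Pi.single i (z.2 i)) : F1' × (∀ i, G1 i)).2 = z.2 := by
      rw [show ((∑ i, ((0 : F1'), Pi.single i (z.2 i)) : F1' × (∀ i, G1 i)).2)
        = (LinearMap.snd R F1' (∀ i, G1 i)) (∑ i, ((0 : F1'), Pi.single i (z.2 i))) from rfl,
        map_sum]
      simp [Finset.univ_sum_single]
    ext
    · simp [h1']
    · simp [h2']
  -- decomposition of an element of T₂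
  have hdec2 : ∀ w : F2 × (∀ i, G2 i),
      w = (w.1, (0 : ∀ i, G2 i)) + ∑ i, ((0 : F2), Pi.single i (w.2 i)) := by
    intro w
    have h1' : (∑ i, ((0 : F2), Pi.single i (w.2 i)) : F2 × (∀ i, G2 i)).1 = 0 := by
      rw [show ((∑ i, ((0 : F2), Pi.single i (w.2 i)) : F2 × (∀ i, G2 i)).1)
        = (LinearMap.fst R F2 (∀ i, G2 i)) (∑ i, ((0 : F2), Pi.single i (w.2 i))) from rfl,
        map_sum]
      simp
    have h2' : (∑ i, ((0 : F2), Pi.single i (w.2 i)) : F2 × (∀ i, G2 i)).2 = w.2 := by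
      rw [show ((∑ i, ((0 : F2), Pi.single i (w.2 i)) : F2 × (∀ i, G2 i)).2)
        = (LinearMap.snd R F2 (∀ i, G2 i)) (∑ i, ((0 : F2), Pi.single i (w.2 i))) from rfl,
        map_sum]
      simp [Finset.univ_sum_single]
    ext
    · simp [h1']
    · simp [h2']
  -- smul membership helper
  have hsm2 : ∀ (r : R), r ∈ maximalIdeal R → ∀ x : F2, r • x ∈ M2 := fun r hr x =>
    Submodule.smul_mem_smul hr Submodule.mem_top
  have hsm3 : ∀ (r : R), r ∈ maximalIdeal R → ∀ x : F3, r • x ∈ M3 := fun r hr x =>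
    Submodule.smul_mem_smul hr Submodule.mem_top
  -- the individual pieces for degree-1 products
  have A1 : ∀ f f' : F1', (t11 (f, 0) (f', 0)).1 = μ11 (f, 0) (f', 0) := by
    intro f f'
    obtain ⟨g2, _, heq⟩ := h1 f f'
    rw [heq]
  have A2 : ∀ (f : F1') (j : Fin t) (g' : G1 j),
      (t11 (f, 0) (0, Pi.single j g')).1 ∈ M2 := by
    intro f j g'
    obtain ⟨g2, _, heq⟩ := h2 f j g'
    rw [heq]
    exact hsm2 _ (hminG1 j g') _
  have A3 : ∀ (i : Fin t) (g : G1 i) (f' : F1'),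
      (t11 (0, Pi.single i g) (f', 0)).1 ∈ M2 := by
    intro i g f'
    rw [hskew]
    exact neg_mem (A2 f' i g)
  have A4 : ∀ (i j : Fin t) (g : G1 i) (g' : G1 j),
      (t11 (0, Pi.single i g) (0, Pi.single j g')).1 ∈ M2 := by
    have key : ∀ (i j : Fin t), i < j → ∀ (g : G1 i) (g' : G1 j),
        (t11 (0, Pi.single i g) (0, Pi.single j g')).1 ∈ M2 := by
      intro i j hij g g'
      obtain ⟨g2, _, heq⟩ := h4 i j hij g g'
      rw [heq]
      exact hsm2 _ (Ideal.mul_mem_right _ _ (hminG1 i g)) _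
    intro i j g g'
    rcases lt_trichotomy i j with hij | hij | hij
    · exact key i j hij g g'
    · subst hij
      rw [h3 i g g']
      simpa using M2.zero_mem
    · rw [hskew]
      exact neg_mem (key j i hij g' g)
  have hz10 : ((0 : F1'), (0 : Fin t → R)) = 0 := rfl
  set j1 : (F1' × (∀ i, G1 i)) →ₗ[R] F1' × (Fin t → R) :=
    (LinearMap.inl R F1' (Fin t → R)).comp (LinearMap.fst R F1' (∀ i, G1 i)) with hj1
  constructor
  · -- degree (1,1)
    intro z z'
    set L : (F1' × (∀ i, G1 i)) →ₗ[R] (F1' × (∀ i, G1 i)) →ₗ[R] F2 :=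
      t11.compr₂ (LinearMap.fst R F2 (∀ i, G2 i)) - ((μ11.comp j1).compl₂ j1) with hL
    have hLval : ∀ a c, L a c = (t11 a c).1 - μ11 (a.1, 0) (c.1, 0) := fun _ _ => rfl
    have Q1 : ∀ f f' : F1', L (f, 0) (f', 0) ∈ M2 := by
      intro f f'
      simp [hLval, A1]
    have Q2 : ∀ (f : F1') (j : Fin t) (g' : G1 j),
        L (f, 0) ((0 : F1'), Pi.single j g') ∈ M2 := by
      intro f j g'
      simpa [hLval, hz10] using A2 f j g'
    have Q3 : ∀ (i : Fin t) (g : G1 i) (f' : F1'),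
        L ((0 : F1'), Pi.single i g) (f', 0) ∈ M2 := by
      intro i g f'
      simpa [hLval, hz10] using A3 i g f'
    have Q4 : ∀ (i j : Fin t) (g : G1 i) (g' : G1 j),
        L ((0 : F1'), Pi.single i g) ((0 : F1'), Pi.single j g') ∈ M2 := by
      intro i j g g'
      simpa [hLval, hz10] using A4 i j g g'
    rw [← hLval z z',
      show L z z' = L ((z.1, (0 : ∀ i, G1 i)) + ∑ i, ((0 : F1'), Pi.single i (z.2 i)))
        ((z'.1, (0 : ∀ i, G1 i)) + ∑ i, ((0 : F1'), Pi.single i (z'.2 i))) from by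
          rw [← hdec1 z, ← hdec1 z']]
    simp only [map_add, LinearMap.add_apply, map_sum, LinearMap.sum_apply]
    exact add_mem (add_mem (Q1 z.1 z'.1)
        (Submodule.sum_mem _ fun d _ => Q3 d (z.2 d) z'.1))
      (Submodule.sum_mem _ fun x _ => add_mem (Q2 z.1 x (z'.2 x))
        (Submodule.sum_mem _ fun d _ => Q4 d x (z.2 d) (z'.2 x)))
  · -- degree (1,2)
    intro z w
    have B1 : ∀ (f : F1') (v : F2), (t12 (f, 0) (v, 0)).1 = μ12 (f, 0) v := by
      intro f v
      obtain ⟨g3, heq⟩ := h5 f v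
      rw [heq]
    have B2 : ∀ (f : F1') (j : Fin t) (c : G2 j),
        (t12 (f, 0) ((0 : F2), Pi.single j c)).1 = 0 := by
      intro f j c
      obtain ⟨g3, heq⟩ := h6 f j c
      rw [heq]
    have B3 : ∀ (i : Fin t) (g : G1 i) (v : F2),
        (t12 ((0 : F1'), Pi.single i g) (v, 0)).1 ∈ M3 := by
      intro i g v
      obtain ⟨g3, heq⟩ := h9 i g v
      rw [heq]
      exact hsm3 _ (neg_mem (hminG1 i g)) _
    have B4 : ∀ (i j : Fin t) (g : G1 i) (c : G2 j),
        (t12 ((0 : F1'), Pi.single i g) ((0 : F2), Pi.single j c)).1 = 0 := by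
      intro i j g c
      by_cases hij : i = j
      · subst hij
        rw [h7 i g c]
      · obtain ⟨g3, heq⟩ := h8 i j hij g c
        rw [heq]
    set L : (F1' × (∀ i, G1 i)) →ₗ[R] (F2 × (∀ i, G2 i)) →ₗ[R] F3 :=
      t12.compr₂ (LinearMap.fst R F3 (∀ i, G3 i))
        - ((μ12.comp j1).compl₂ (LinearMap.fst R F2 (∀ i, G2 i))) with hL
    have hLval : ∀ a c, L a c = (t12 a c).1 - μ12 (a.1, 0) c.1 := fun _ _ => rfl
    have Q1 : ∀ (f : F1') (v : F2), L (f, 0) (v, 0) ∈ M3 := by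
      intro f v
      simp [hLval, B1]
    have Q2 : ∀ (f : F1') (j : Fin t) (c : G2 j),
        L (f, 0) ((0 : F2), Pi.single j c) ∈ M3 := by
      intro f j c
      simp [hLval, B2]
    have Q3 : ∀ (i : Fin t) (g : G1 i) (v : F2),
        L ((0 : F1'), Pi.single i g) (v, 0) ∈ M3 := by
      intro i g v
      simpa [hLval, hz10] using B3 i g v
    have Q4 : ∀ (i j : Fin t) (g : G1 i) (c : G2 j),
        L ((0 : F1'), Pi.single i g) ((0 : F2), Pi.single j c) ∈ M3 := by
      intro i j g c
      simp [hLval, hz10, B4]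
    rw [← hLval z w,
      show L z w = L ((z.1, (0 : ∀ i, G1 i)) + ∑ i, ((0 : F1'), Pi.single i (z.2 i)))
        ((w.1, (0 : ∀ i, G2 i)) + ∑ i, ((0 : F2), Pi.single i (w.2 i))) from by
          rw [← hdec1 z, ← hdec2 w]]
    simp only [map_add, LinearMap.add_apply, map_sum, LinearMap.sum_apply]
    exact add_mem (add_mem (Q1 z.1 w.1)
        (Submodule.sum_mem _ fun d _ => Q3 d (z.2 d) w.1))
      (Submodule.sum_mem _ fun x _ => add_mem (Q2 z.1 x (w.2 x))
        (Submodule.sum_mem _ fun d _ => Q4 d x (z.2 d) (w.2 x)))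
end
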